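/- arXiv:2312.11717 — 5 statements merged into one kernel-verified Lean document; each statement's English description precedes it below -/
import Mathlib

section
/- Let E and F be Banach lattices with F Dedekind complete, let n ≥ 1, and let A be a linear subspace of the space of continuous n-homogeneous polynomials from E to F endowed with a complete norm ‖·‖_A such that (I) ‖P‖ ≤ ‖P‖_A for every P ∈ A, and (II) ‖P‖_A ≤ ‖Q‖_A whenever P ∈ A, Q ∈ A is positive and |P(x)| ≤ Q(|x|) for every x ∈ E. Assume also that (E, F) satisfies the A-domination property and set A^r := span{P ∈ A : P positive}. Then A^r is an ideal in the space of regular n-homogeneous polynomials: if P ∈ A^r and Q is a regular n-homogeneous polynomial from E to F such that every positive n-homogeneous polynomial R with R − P and R + P positive also has R − Q and R + Q positive (that is, |Q| ≤ |P|), then Q ∈ A^r. -/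
open Filter Topology Metric

section Defs

variable {E F : Type*} [NormedAddCommGroup E] [Lattice E] [HasSolidNorm E] [IsOrderedAddMonoid E] [NormedSpace ℝ E]
  [NormedAddCommGroup F] [Lattice F] [HasSolidNorm F] [IsOrderedAddMonoid F] [NormedSpace ℝ F]

/-- `P : E → F` is a continuous `n`-homogeneous polynomial: `P x = T(x,…,x)` for a
symmetric continuous `n`-linear map `T`. -/
def IsHomogPoly (n : ℕ) (P : E → F) : Prop :=
  ∃ T : ContinuousMultilinearMap ℝ (fun _ : Fin n => E) F,
    (∀ (v : Fin n → E) (σ : Equiv.Perm (Fin n)), T (v ∘ σ) = T v) ∧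
    ∀ x : E, P x = T (fun _ => x)

/-- `P` is a positive `n`-homogeneous polynomial: its (symmetric) generating multilinear
map takes nonnegative values on nonnegative arguments. -/
def IsPosPoly (n : ℕ) (P : E → F) : Prop :=
  ∃ T : ContinuousMultilinearMap ℝ (fun _ : Fin n => E) F,
    (∀ (v : Fin n → E) (σ : Equiv.Perm (Fin n)), T (v ∘ σ) = T v) ∧
    (∀ v : Fin n → E, (∀ i, 0 ≤ v i) → 0 ≤ T v) ∧
    ∀ x : E, P x = T (fun _ => x)

/-- `P` is regular: a difference of two positive `n`-homogeneous polynomials. -/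
def IsRegPoly (n : ℕ) (P : E → F) : Prop :=
  ∃ P₁ P₂ : E → F, IsPosPoly n P₁ ∧ IsPosPoly n P₂ ∧ P = P₁ - P₂

/-- The sup norm `‖P‖ = sup {‖P x‖ : ‖x‖ ≤ 1}`. -/
noncomputable def polySupNorm (P : E → F) : ℝ :=
  sSup {r : ℝ | ∃ x : E, ‖x‖ ≤ 1 ∧ r = ‖P x‖}

/-- The regular norm `‖P‖_r = inf {‖Q‖ : Q positive, Q - P and Q + P positive}`. -/
noncomputable def polyRegNorm (n : ℕ) (P : E → F) : ℝ :=
  sInf {r : ℝ | ∃ Q : E → F, IsPosPoly n Q ∧ IsPosPoly n (Q - P) ∧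
    IsPosPoly n (Q + P) ∧ r = polySupNorm Q}

/-- Dedekind completeness: every nonempty subset bounded above has a least upper bound. -/
def DedekindComplete (G : Type*) [Preorder G] : Prop :=
  ∀ S : Set G, S.Nonempty → BddAbove S → ∃ b, IsLUB S b

/-- `A^r`: the linear span of the positive polynomials belonging to `A`. -/
def PosSpanSet (n : ℕ) (A : Set (E → F)) : Set (E → F) :=
  (Submodule.span ℝ {P : E → F | P ∈ A ∧ IsPosPoly n P} : Submodule ℝ (E → F))

/-- `‖P‖_{A,r} = inf {‖Q‖_A : Q ∈ A positive, Q - P and Q + P positive}`. -/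
noncomputable def ArNorm (n : ℕ) (A : Set (E → F)) (NA : (E → F) → ℝ) (P : E → F) : ℝ :=
  sInf {r : ℝ | ∃ Q : E → F, Q ∈ A ∧ IsPosPoly n Q ∧ IsPosPoly n (Q - P) ∧
    IsPosPoly n (Q + P) ∧ r = NA Q}

end Defs

section Aux

variable {E F : Type*} [NormedAddCommGroup E] [Lattice E] [HasSolidNorm E] [IsOrderedAddMonoid E] [NormedSpace ℝ E]
  [NormedAddCommGroup F] [Lattice F] [HasSolidNorm F] [IsOrderedAddMonoid F] [NormedSpace ℝ F]

lemma two_nsmul_reflect_nonneg {F : Type*} [NormedAddCommGroup F] [Lattice F] [HasSolidNorm F] [IsOrderedAddMonoid F] {a : F}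
    (h : 0 ≤ 2 • a) : 0 ≤ a := by
  suffices hs : (a ⊓ 0) + (a ⊓ 0) = a ⊓ 0 by
    rwa [← inf_eq_right, ← add_eq_left (a := a ⊓ 0)]
  rw [add_inf, inf_add, ← two_nsmul, add_zero, zero_add, inf_assoc, inf_left_idem, inf_comm,
    inf_assoc, inf_of_le_left h]

lemma my_smul_nonneg {F : Type*} [NormedAddCommGroup F] [Lattice F] [HasSolidNorm F] [IsOrderedAddMonoid F] [NormedSpace ℝ F] {c : ℝ} {y : F}
    (hc : 0 ≤ c) (hy : 0 ≤ y) : 0 ≤ c • y := by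
  have hrefl : ∀ (k : ℕ) (z : F), 0 ≤ (2^k) • z → 0 ≤ z := by
    intro k
    induction k with
    | zero => intro z hz; simpa using hz
    | succ k ih =>
      intro z hz
      have h2 : (2:ℕ)^(k+1) = 2 * 2^k := by ring
      rw [h2, mul_comm, mul_nsmul] at hz
      exact ih z (two_nsmul_reflect_nonneg hz)
  have hdy : ∀ (m k : ℕ), 0 ≤ ((m : ℝ) / 2^k) • y := by
    intro m k
    apply hrefl k
    rw [← Nat.cast_smul_eq_nsmul ℝ, smul_smul]
    rw [Nat.cast_pow, Nat.cast_ofNat, mul_div_cancel₀ _ (by positivity), Nat.cast_smul_eq_nsmul]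
    exact nsmul_nonneg hy m
  have htend : Tendsto (fun k : ℕ => ((⌊c * 2^k⌋₊ : ℝ) / 2^k)) atTop (nhds c) := by
    have key : ∀ k : ℕ, c - 1/2^k ≤ ((⌊c * 2^k⌋₊ : ℝ) / 2^k) ∧ ((⌊c * 2^k⌋₊ : ℝ) / 2^k) ≤ c := by
      intro k
      have h2 : (0:ℝ) < 2^k := by positivity
      constructor
      · rw [sub_le_iff_le_add, ← add_div, le_div_iff₀ h2]
        have := Nat.lt_floor_add_one (c * 2^k)
        nlinarith [this]
      · rw [div_le_iff₀ h2]
        exact Nat.floor_le (by positivity)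
    have h1 : Tendsto (fun k : ℕ => c - 1/2^k) atTop (nhds c) := by
      have : Tendsto (fun k : ℕ => (1:ℝ)/2^k) atTop (nhds 0) := by
        simpa [one_div, Function.comp_def] using tendsto_inv_atTop_zero.comp
          (tendsto_pow_atTop_atTop_of_one_lt (by norm_num : (1:ℝ) < 2))
      simpa using tendsto_const_nhds.sub this
    exact tendsto_of_tendsto_of_tendsto_of_le_of_le h1 tendsto_const_nhds
      (fun k => (key k).1) (fun k => (key k).2)
  exact le_of_tendsto_of_tendsto' tendsto_const_nhds (htend.smul_const y) (fun k => hdy _ k)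

lemma isPosPoly_zero (n : ℕ) : IsPosPoly n (0 : E → F) :=
  ⟨0, fun _ _ => rfl, fun _ _ => le_refl 0, fun _ => rfl⟩

lemma isPosPoly_add {n : ℕ} {P Q : E → F} (hP : IsPosPoly n P) (hQ : IsPosPoly n Q) :
    IsPosPoly n (P + Q) := by
  obtain ⟨T, hTs, hTp, hTe⟩ := hP
  obtain ⟨S, hSs, hSp, hSe⟩ := hQ
  refine ⟨T + S, fun v σ => ?_, fun v hv => ?_, fun x => ?_⟩
  · simp [hTs v σ, hSs v σ]
  · simpa using add_nonneg (hTp v hv) (hSp v hv)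
  · simp [hTe, hSe]

lemma isPosPoly_smul {n : ℕ} {c : ℝ} (hc : 0 ≤ c) {P : E → F} (hP : IsPosPoly n P) :
    IsPosPoly n (c • P) := by
  obtain ⟨T, hTs, hTp, hTe⟩ := hP
  refine ⟨c • T, fun v σ => ?_, fun v hv => ?_, fun x => ?_⟩
  · simp [hTs v σ]
  · simpa using my_smul_nonneg hc (hTp v hv)
  · simp [hTe]

end Aux

theorem statement2 {E F : Type*} [NormedAddCommGroup E] [Lattice E] [HasSolidNorm E] [IsOrderedAddMonoid E] [NormedSpace ℝ E] [CompleteSpace E]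
    [NormedAddCommGroup F] [Lattice F] [HasSolidNorm F] [IsOrderedAddMonoid F] [NormedSpace ℝ F] [CompleteSpace F]
    (hF : DedekindComplete F) (n : ℕ) (hn : 1 ≤ n)
    (A : Set (E → F)) (hApoly : ∀ P ∈ A, IsHomogPoly n P)
    (hA0 : (0 : E → F) ∈ A)
    (hAadd : ∀ P ∈ A, ∀ Q ∈ A, P + Q ∈ A)
    (hAsmul : ∀ (c : ℝ), ∀ P ∈ A, c • P ∈ A)
    (NA : (E → F) → ℝ)
    (hNA0 : ∀ P ∈ A, (NA P = 0 ↔ P = 0))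
    (hNAsmul : ∀ (c : ℝ), ∀ P ∈ A, NA (c • P) = |c| * NA P)
    (hNAadd : ∀ P ∈ A, ∀ Q ∈ A, NA (P + Q) ≤ NA P + NA Q)
    (hNAcomplete : ∀ f : ℕ → (E → F), (∀ k, f k ∈ A) →
      (∀ ε : ℝ, 0 < ε → ∃ K, ∀ j ≥ K, ∀ k ≥ K, NA (f j - f k) < ε) →
      ∃ g ∈ A, Tendsto (fun k => NA (f k - g)) atTop (nhds 0))
    (hI : ∀ P ∈ A, polySupNorm P ≤ NA P)
    (hII : ∀ P ∈ A, ∀ Q ∈ A, IsPosPoly n Q → (∀ x : E, |P x| ≤ Q |x|) → NA P ≤ NA Q)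
    (hDom : ∀ P Q : E → F, IsPosPoly n P → IsPosPoly n Q → IsPosPoly n (Q - P) →
      Q ∈ A → P ∈ A)
 :
    -- A^r is an ideal in the regular polynomials: |Q| ≤ |P|, P ∈ A^r, Q regular ⟹ Q ∈ A^r
    ∀ P ∈ PosSpanSet n A, ∀ Q : E → F, IsRegPoly n Q →
      (∀ R : E → F, IsPosPoly n R → IsPosPoly n (R - P) → IsPosPoly n (R + P) →
        IsPosPoly n (R - Q) ∧ IsPosPoly n (R + Q)) →
      Q ∈ PosSpanSet n A := by
  intro P hP Q _hQreg hspec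
  -- Step 1: P = P₁ - P₂ with P₁, P₂ positive elements of A
  have hdec : ∃ P₁ P₂ : E → F, (P₁ ∈ A ∧ IsPosPoly n P₁) ∧ (P₂ ∈ A ∧ IsPosPoly n P₂) ∧
      P = P₁ - P₂ := by
    have hP' : P ∈ Submodule.span ℝ {P : E → F | P ∈ A ∧ IsPosPoly n P} := hP
    clear hP hspec _hQreg
    induction hP' using Submodule.span_induction with
    | mem p hp => exact ⟨p, 0, hp, ⟨hA0, isPosPoly_zero n⟩, by simp⟩
    | zero => exact ⟨0, 0, ⟨hA0, isPosPoly_zero n⟩, ⟨hA0, isPosPoly_zero n⟩, by simp⟩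
    | add p q _ _ ihp ihq =>
      obtain ⟨p₁, p₂, hp₁, hp₂, hpe⟩ := ihp
      obtain ⟨q₁, q₂, hq₁, hq₂, hqe⟩ := ihq
      exact ⟨p₁ + q₁, p₂ + q₂,
        ⟨hAadd _ hp₁.1 _ hq₁.1, isPosPoly_add hp₁.2 hq₁.2⟩,
        ⟨hAadd _ hp₂.1 _ hq₂.1, isPosPoly_add hp₂.2 hq₂.2⟩,
        by rw [hpe, hqe]; abel⟩
    | smul c p _ ihp =>
      obtain ⟨p₁, p₂, hp₁, hp₂, hpe⟩ := ihp
      rcases le_or_gt 0 c with hc | hc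
      · exact ⟨c • p₁, c • p₂,
          ⟨hAsmul c _ hp₁.1, isPosPoly_smul hc hp₁.2⟩,
          ⟨hAsmul c _ hp₂.1, isPosPoly_smul hc hp₂.2⟩,
          by rw [hpe, smul_sub]⟩
      · refine ⟨(-c) • p₂, (-c) • p₁,
          ⟨hAsmul (-c) _ hp₂.1, isPosPoly_smul (by linarith) hp₂.2⟩,
          ⟨hAsmul (-c) _ hp₁.1, isPosPoly_smul (by linarith) hp₁.2⟩, ?_⟩
        rw [hpe, smul_sub]
        funext x
        simp only [Pi.sub_apply, Pi.smul_apply]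
        module
  obtain ⟨P₁, P₂, ⟨hP₁A, hP₁pos⟩, ⟨hP₂A, hP₂pos⟩, hPe⟩ := hdec
  -- Step 2: R := P₁ + P₂ dominates P
  set R : E → F := P₁ + P₂ with hR
  have hRA : R ∈ A := hAadd _ hP₁A _ hP₂A
  have hRpos : IsPosPoly n R := isPosPoly_add hP₁pos hP₂pos
  have hRmP : IsPosPoly n (R - P) := by
    have : R - P = P₂ + P₂ := by rw [hR, hPe]; abel
    rw [this]; exact isPosPoly_add hP₂pos hP₂pos
  have hRpP : IsPosPoly n (R + P) := by
    have : R + P = P₁ + P₁ := by rw [hR, hPe]; abel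
    rw [this]; exact isPosPoly_add hP₁pos hP₁pos
  obtain ⟨hRmQ, hRpQ⟩ := hspec R hRpos hRmP hRpP
  -- Step 3: Q₊ := ½(R+Q), Q₋ := ½(R-Q) are positive and dominated by R, hence in A
  set Qp : E → F := (1/2 : ℝ) • (R + Q) with hQp
  set Qm : E → F := (1/2 : ℝ) • (R - Q) with hQm
  have hQppos : IsPosPoly n Qp := isPosPoly_smul (by norm_num) hRpQ
  have hQmpos : IsPosPoly n Qm := isPosPoly_smul (by norm_num) hRmQ
  have hRQp : R - Qp = Qm := by
    rw [hQp, hQm]; funext x; simp only [Pi.sub_apply, Pi.add_apply, Pi.smul_apply]; module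
  have hRQm : R - Qm = Qp := by
    rw [hQp, hQm]; funext x; simp only [Pi.sub_apply, Pi.add_apply, Pi.smul_apply]; module
  have hQpA : Qp ∈ A := hDom Qp R hQppos hRpos (hRQp ▸ hQmpos) hRA
  have hQmA : Qm ∈ A := hDom Qm R hQmpos hRpos (hRQm ▸ hQppos) hRA
  -- Step 4: Q = Q₊ - Q₋ ∈ span
  have hQe : Q = Qp - Qm := by
    rw [hQp, hQm]; funext x; simp only [Pi.sub_apply, Pi.add_apply, Pi.smul_apply]; module
  show Q ∈ (Submodule.span ℝ {P : E → F | P ∈ A ∧ IsPosPoly n P} : Submodule ℝ (E → F))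
  rw [hQe]
  exact sub_mem (Submodule.subset_span ⟨hQpA, hQppos⟩)
    (Submodule.subset_span ⟨hQmA, hQmpos⟩)
end

section
/- Let 1 < p < ∞, let E and F be Banach lattices, and let n ≥ 1. If P and Q are solid p-compact n-homogeneous polynomials from E to F with Q positive and |P(x)| ≤ Q(|x|) for every x ∈ E, then ‖P‖_{|K_p|} ≤ ‖Q‖_{|K_p|}. -/
open Filter Topology Metric

section Defs

variable {E F : Type*} [NormedAddCommGroup E] [Lattice E] [HasSolidNorm E] [IsOrderedAddMonoid E] [NormedSpace ℝ E]
  [NormedAddCommGroup F] [Lattice F] [HasSolidNorm F] [IsOrderedAddMonoid F] [NormedSpace ℝ F]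

/-- The conjugate exponent `p* = p / (p - 1)`. -/
noncomputable def conjExpo (p : ℝ) : ℝ := p / (p - 1)

/-- `(λ_j)` lies in the closed unit ball of `ℓ_{p*}` (`ℓ_∞` when `p = 1`). -/
def PConvCoef (p : ℝ) (lam : ℕ → ℝ) : Prop :=
  if p = 1 then ∀ j, |lam j| ≤ 1
  else Summable (fun j => |lam j| ^ conjExpo p) ∧ (∑' j, |lam j| ^ conjExpo p) ≤ 1

/-- `p`-convex hull `p-conv{(y_j)} = {∑_j λ_j y_j : (λ_j) ∈ B_{ℓ_{p*}}}`. -/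
def pConvSet (p : ℝ) (y : ℕ → F) : Set F :=
  {z : F | ∃ lam : ℕ → ℝ, PConvCoef p lam ∧
    Tendsto (fun m => ∑ j ∈ Finset.range m, lam j • y j) atTop (nhds z)}

/-- The solid hull of a set. -/
def solidHullSet (S : Set F) : Set F := {y : F | ∃ z ∈ S, |y| ≤ |z|}

/-- `(y_j) ∈ ℓ_p(F)`. -/
def MemLpSeq (p : ℝ) (y : ℕ → F) : Prop := Summable (fun j => ‖y j‖ ^ p)

/-- `‖(y_j)‖_p = (∑_j ‖y_j‖^p)^{1/p}`. -/
noncomputable def lpSeqNorm (p : ℝ) (y : ℕ → F) : ℝ := (∑' j, ‖y j‖ ^ p) ^ (1 / p)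

/-- `P` is solid `p`-compact: `P(B_E) ⊆ sol(p-conv{(y_j)})` for some `(y_j) ∈ ℓ_p(F)`. -/
def IsSolidPCompact (p : ℝ) (n : ℕ) (P : E → F) : Prop :=
  IsHomogPoly n P ∧ ∃ y : ℕ → F, MemLpSeq p y ∧
    P '' closedBall (0 : E) 1 ⊆ solidHullSet (pConvSet p y)

/-- `‖P‖_{|K_p|} = inf {‖(y_j)‖_p : P(B_E) ⊆ sol(p-conv{(y_j)})}`. -/
noncomputable def solidPNorm (p : ℝ) (P : E → F) : ℝ :=
  sInf {r : ℝ | ∃ y : ℕ → F, MemLpSeq p y ∧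
    P '' closedBall (0 : E) 1 ⊆ solidHullSet (pConvSet p y) ∧ r = lpSeqNorm p y}

/-- `P` is `p`-compact: `P(B_E) ⊆ p-conv{(y_j)}` for some `(y_j) ∈ ℓ_p(F)`. -/
def IsPCompactPoly (p : ℝ) (n : ℕ) (P : E → F) : Prop :=
  IsHomogPoly n P ∧ ∃ y : ℕ → F, MemLpSeq p y ∧
    P '' closedBall (0 : E) 1 ⊆ pConvSet p y

/-- `‖P‖_{K_p} = inf {‖(y_j)‖_p : P(B_E) ⊆ p-conv{(y_j)}}`. -/
noncomputable def pCompactNorm (p : ℝ) (P : E → F) : ℝ :=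
  sInf {r : ℝ | ∃ y : ℕ → F, MemLpSeq p y ∧
    P '' closedBall (0 : E) 1 ⊆ pConvSet p y ∧ r = lpSeqNorm p y}

end Defs

theorem statement7 {E F : Type*} [NormedAddCommGroup E] [Lattice E] [HasSolidNorm E] [IsOrderedAddMonoid E] [NormedSpace ℝ E] [CompleteSpace E]
    [NormedAddCommGroup F] [Lattice F] [HasSolidNorm F] [IsOrderedAddMonoid F] [NormedSpace ℝ F] [CompleteSpace F]
    (p : ℝ) (hp : 1 < p) (n : ℕ) (hn : 1 ≤ n)
    (P Q : E → F) (hP : IsSolidPCompact p n P) (hQ : IsSolidPCompact p n Q)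
    (hQpos : IsPosPoly n Q) (hPQ : ∀ x : E, |P x| ≤ Q |x|) :
    solidPNorm p P ≤ solidPNorm p Q := by
  apply csInf_le_csInf
  · refine ⟨0, ?_⟩
    rintro r ⟨y, -, -, rfl⟩
    exact Real.rpow_nonneg (tsum_nonneg fun j => Real.rpow_nonneg (norm_nonneg _) p) _
  · obtain ⟨-, y, hy, hsub⟩ := hQ
    exact ⟨lpSeqNorm p y, y, hy, hsub, rfl⟩
  · rintro r ⟨y, hy, hsub, rfl⟩
    refine ⟨y, hy, ?_, rfl⟩
    rintro b ⟨x, hx, rfl⟩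
    have hax : |x| ∈ closedBall (0 : E) 1 := by
      simpa [mem_closedBall, dist_zero_right, norm_abs_eq_norm] using hx
    obtain ⟨z, hz, hle⟩ := hsub ⟨|x|, hax, rfl⟩
    refine ⟨z, hz, ?_⟩
    calc |P x| ≤ Q |x| := hPQ x
      _ ≤ |Q (|x|)| := le_abs_self _
      _ ≤ |z| := hle
end

section
/- Let 1 ≤ p < ∞, let E and F be Banach lattices, let n ≥ 1, and let P, Q : E → F be positive n-homogeneous polynomials with P ≤ Q (that is, Q − P is positive). If Q is solid p-compact, then P is solid p-compact. -/
open Filter Topology Metric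

lemma pos_multilinear_abs_le {E F : Type*} [NormedAddCommGroup E] [Lattice E] [HasSolidNorm E] [IsOrderedAddMonoid E] [NormedSpace ℝ E]
    [NormedAddCommGroup F] [Lattice F] [HasSolidNorm F] [IsOrderedAddMonoid F] [NormedSpace ℝ F] {n : ℕ}
    (T : ContinuousMultilinearMap ℝ (fun _ : Fin n => E) F)
    (hT : ∀ v : Fin n → E, (∀ i, 0 ≤ v i) → 0 ≤ T v)
    {a b : E} (ha : 0 ≤ a) (hb : 0 ≤ b) :
    |T (fun _ => a - b)| ≤ T (fun _ => a + b) := by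
  classical
  set ε : Finset (Fin n) → ℝ := fun s => ∏ i, (if i ∈ s then (1:ℝ) else -1) with hε
  have hεval : ∀ s, ε s = 1 ∨ ε s = -1 := by
    intro s
    apply mul_self_eq_one_iff.mp
    rw [hε]
    simp only [← Finset.prod_mul_distrib]
    apply Finset.prod_eq_one
    intro i _
    by_cases h : i ∈ s <;> simp [h]
  have hvpos : ∀ s : Finset (Fin n),
      0 ≤ T (s.piecewise (fun _ => a) (fun _ => b)) := by
    intro s
    apply hT
    intro i
    by_cases h : i ∈ s <;> simp [Finset.piecewise, h, ha, hb]
  have hadd : T (fun _ => a + b)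
      = ∑ s : Finset (Fin n), T (s.piecewise (fun _ => a) (fun _ => b)) := by
    have := T.toMultilinearMap.map_add_univ (fun _ => a) (fun _ => b)
    exact this
  have hsub : T (fun _ => a - b)
      = ∑ s : Finset (Fin n), ε s • T (s.piecewise (fun _ => a) (fun _ => b)) := by
    have h1 : (fun _ : Fin n => a - b) = (fun _ : Fin n => a) + (fun _ : Fin n => -b) := by
      funext i; simp [sub_eq_add_neg]
    have := T.toMultilinearMap.map_add_univ (fun _ => a) (fun _ => -b)
    rw [show T (fun _ => a - b) = T ((fun _ : Fin n => a) + fun _ => -b) by rw [← h1]]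
    rw [show T ((fun _ : Fin n => a) + fun _ => -b)
        = T.toMultilinearMap ((fun _ : Fin n => a) + fun _ => -b) from rfl, this]
    apply Finset.sum_congr rfl
    intro s _
    have hpw : s.piecewise (fun _ : Fin n => a) (fun _ => -b)
        = fun i => (if i ∈ s then (1:ℝ) else -1) • s.piecewise (fun _ : Fin n => a) (fun _ => b) i := by
      funext i
      by_cases h : i ∈ s <;> simp [Finset.piecewise, h]
    show T (s.piecewise (fun _ : Fin n => a) (fun _ => -b)) = _
    rw [hpw, T.map_smul_univ]
  rw [abs_le']
  refine ⟨?_, ?_⟩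
  · rw [← sub_nonneg, hadd, hsub, ← Finset.sum_sub_distrib]
    apply Finset.sum_nonneg
    intro s _
    rcases hεval s with h | h
    · rw [h, one_smul]; simp
    · rw [h, neg_smul, one_smul, sub_neg_eq_add]; exact add_nonneg (hvpos s) (hvpos s)
  · rw [← sub_nonneg, sub_neg_eq_add, hadd, hsub, ← Finset.sum_add_distrib]
    apply Finset.sum_nonneg
    intro s _
    rcases hεval s with h | h
    · rw [h, one_smul]; exact add_nonneg (hvpos s) (hvpos s)
    · rw [h]; simp


theorem statement8 {E F : Type*} [NormedAddCommGroup E] [Lattice E] [HasSolidNorm E] [IsOrderedAddMonoid E] [NormedSpace ℝ E] [CompleteSpace E]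
    [NormedAddCommGroup F] [Lattice F] [HasSolidNorm F] [IsOrderedAddMonoid F] [NormedSpace ℝ F] [CompleteSpace F]
    (p : ℝ) (hp : 1 ≤ p) (n : ℕ) (hn : 1 ≤ n)
    (P Q : E → F) (hPpos : IsPosPoly n P) (hQpos : IsPosPoly n Q)
    (hPQ : IsPosPoly n (Q - P)) (hQ : IsSolidPCompact p n Q) :
    IsSolidPCompact p n P := by
  obtain ⟨TP, hTPsym, hTPpos, hTPeq⟩ := hPpos
  obtain ⟨TQ, hTQsym, hTQpos, hTQeq⟩ := hQpos
  obtain ⟨TD, hTDsym, hTDpos, hTDeq⟩ := hPQ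
  obtain ⟨hQhom, y, hy, hsub⟩ := hQ
  refine ⟨⟨TP, hTPsym, hTPeq⟩, y, hy, ?_⟩
  rintro _ ⟨x, hx, rfl⟩
  have hxabs : |x| ∈ Metric.closedBall (0 : E) 1 := by
    simp only [Metric.mem_closedBall, dist_zero_right] at hx ⊢
    rwa [norm_abs_eq_norm]
  obtain ⟨z, hz, hQz⟩ := hsub ⟨|x|, hxabs, rfl⟩
  refine ⟨z, hz, le_trans ?_ hQz⟩
  -- |P x| ≤ P |x| ≤ Q |x| = |Q |x||
  have h1 : |P x| ≤ P |x| := by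
    rw [hTPeq, hTPeq]
    have := pos_multilinear_abs_le TP hTPpos (posPart_nonneg x) (negPart_nonneg x)
    rwa [posPart_sub_negPart, posPart_add_negPart] at this
  have h2 : P |x| ≤ Q |x| := by
    have := hTDpos (fun _ => |x|) (fun _ => abs_nonneg x)
    rw [← hTDeq] at this
    simpa [sub_nonneg] using this
  have h3 : 0 ≤ Q |x| := by
    rw [hTQeq]
    exact hTQpos _ (fun _ => abs_nonneg x)
  rw [abs_of_nonneg h3]
  exact le_trans h1 h2
end

section
/- Let n ≥ 1, let E be a Banach lattice and let F be an atomic Banach lattice with order continuous norm. Let (x*_k) be a weak*-null sequence of positive norm-one continuous linear functionals on E, and let (y_k) be a sequence of positive elements of F equivalent to the canonical basis of c0. Then for every x ∈ E the series ∑_{k=1}^∞ (x*_k(x))^n y_k converges in F, the map P(x) = ∑_{k=1}^∞ (x*_k(x))^n y_k is a positive n-homogeneous polynomial from E to F, and P is not compact. -/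
open Filter Topology Metric Pointwise

section Helpers
variable {G : Type*} [NormedAddCommGroup G] [Lattice G] [HasSolidNorm G] [IsOrderedAddMonoid G]

lemma aux_inf_add_le {x y z : G} (hx : 0 ≤ x) (hy : 0 ≤ y) (hz : 0 ≤ z) :
    x ⊓ (y + z) ≤ x ⊓ y + x ⊓ z := by
  have h1 : (x ⊓ y) + (x ⊓ z) = ((x + x) ⊓ (y + x)) ⊓ ((x + z) ⊓ (y + z)) := by
    rw [add_inf, inf_add, inf_add]
  rw [h1]
  refine le_inf (le_inf ?_ ?_) (le_inf ?_ ?_)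
  · exact inf_le_left.trans (le_add_of_nonneg_right hx)
  · exact inf_le_left.trans (le_add_of_nonneg_left hy)
  · exact inf_le_left.trans (le_add_of_nonneg_right hz)
  · exact inf_le_right

lemma aux_disj_nsmul {p q : G} (hp : 0 ≤ p) (hq : 0 ≤ q) (h : p ⊓ q = 0) (k : ℕ) :
    p ⊓ (k • q) = 0 := by
  refine le_antisymm ?_ (le_inf hp (nsmul_nonneg hq k))
  induction k with
  | zero => simp
  | succ m ih =>
    calc p ⊓ ((m + 1) • q) ≤ p ⊓ (m • q) + p ⊓ q := by
          rw [succ_nsmul]; exact aux_inf_add_le hp (nsmul_nonneg hq m) hq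
      _ ≤ 0 + 0 := add_le_add ih h.le
      _ = 0 := by simp

lemma aux_nonneg_of_nsmul {z : G} {m : ℕ} (hm : 1 ≤ m) (h : 0 ≤ m • z) : 0 ≤ z := by
  have hp : (0:G) ≤ z⁺ := posPart_nonneg z
  have hq : (0:G) ≤ z⁻ := negPart_nonneg z
  have hle : m • z⁻ ≤ m • z⁺ := by
    rw [← posPart_sub_negPart z, nsmul_sub] at h
    exact sub_nonneg.1 h
  have h1 : z⁻ ⊓ (m • z⁺) = 0 := by
    refine aux_disj_nsmul hq hp ?_ m
    rw [inf_comm]; exact posPart_inf_negPart_eq_zero z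
  have h2 : (m • z⁺) ⊓ (m • z⁻) = 0 := by
    refine aux_disj_nsmul (nsmul_nonneg hp m) hq ?_ m
    rw [inf_comm]; exact h1
  have h3 : m • z⁻ = 0 := by
    rw [← inf_eq_right.2 hle, h2]
  have h4 : z⁻ ≤ m • z⁻ := by
    obtain ⟨k, rfl⟩ := Nat.exists_eq_add_of_le hm
    rw [add_comm, succ_nsmul]
    exact le_add_of_nonneg_left (nsmul_nonneg hq k)
  rw [← negPart_eq_zero]
  exact le_antisymm (h4.trans h3.le) hq

variable [NormedSpace ℝ G]

lemma aux_smul_nonneg {t : ℝ} (ht : 0 ≤ t) {z : G} (hz : 0 ≤ z) : 0 ≤ t • z := by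
  have hrat : ∀ q : ℚ, 0 ≤ q → 0 ≤ (q : ℝ) • z := by
    intro q hq0
    have hden : (0:G) ≤ q.den • ((q : ℝ) • z) := by
      have : q.den • ((q : ℝ) • z) = ((q.den : ℝ) * (q : ℝ)) • z := by
        rw [mul_smul, Nat.cast_smul_eq_nsmul]
      rw [this]
      have hnum : ((q.den : ℝ) * (q : ℝ)) = (q.num.toNat : ℝ) := by
        have h1 : (q.num.toNat : ℤ) = q.num := Int.toNat_of_nonneg (Rat.num_nonneg.2 hq0)
        have h2 : ((q.num.toNat : ℤ) : ℝ) = ((q.num : ℤ) : ℝ) := by rw [h1]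
        push_cast at h2 ⊢
        rw [h2, mul_comm]
        exact_mod_cast congrArg (fun r : ℚ => (r : ℝ)) (Rat.mul_den_eq_num q)
      rw [hnum, Nat.cast_smul_eq_nsmul]
      exact nsmul_nonneg hz _
    exact aux_nonneg_of_nsmul q.pos hden
  -- approximate t from above by rationals
  have : ∀ m : ℕ, ∃ q : ℚ, t < (q:ℝ) ∧ (q:ℝ) < t + 1/(m+1) := by
    intro m
    refine exists_rat_btwn ?_
    have : (0:ℝ) < 1/(m+1) := by positivity
    linarith
  choose q hq1 hq2 using this
  have hqt : Tendsto (fun m : ℕ => ((q m : ℝ))) atTop (𝓝 t) := by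
    have hub : Tendsto (fun m : ℕ => t + 1/(m+1 : ℝ)) atTop (𝓝 (t + 0)) :=
      tendsto_const_nhds.add tendsto_one_div_add_atTop_nhds_zero_nat
    rw [add_zero] at hub
    exact tendsto_of_tendsto_of_tendsto_of_le_of_le tendsto_const_nhds hub
      (fun m => (hq1 m).le) (fun m => (hq2 m).le)
  have hconv : Tendsto (fun m : ℕ => (q m : ℝ) • z) atTop (𝓝 (t • z)) :=
    hqt.smul tendsto_const_nhds
  exact ge_of_tendsto hconv (Eventually.of_forall fun m => hrat (q m) (by
    exact_mod_cast (ht.trans (hq1 m).le)))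

lemma aux_smul_le_smul {s t : ℝ} (h : s ≤ t) {z : G} (hz : 0 ≤ z) : s • z ≤ t • z := by
  have := aux_smul_nonneg (sub_nonneg.2 h) hz
  rw [sub_smul] at this
  exact sub_nonneg.1 this

end Helpers

section Helpers2
variable {G : Type*} [NormedAddCommGroup G] [Lattice G] [HasSolidNorm G] [IsOrderedAddMonoid G] [NormedSpace ℝ G]

lemma aux_norm_le_of_le {u w : G} (h0 : 0 ≤ u) (h : u ≤ w) : ‖u‖ ≤ ‖w‖ :=
  norm_le_norm_of_abs_le_abs (by
    rw [abs_of_nonneg h0, abs_of_nonneg (h0.trans h)]; exact h)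

lemma aux_smul_mono_vec {t : ℝ} (ht : 0 ≤ t) {x y : G} (h : x ≤ y) : t • x ≤ t • y := by
  have := aux_smul_nonneg ht (sub_nonneg.2 h)
  rw [smul_sub] at this
  exact sub_nonneg.1 this

lemma aux_smul_coeff_le {a : G} (hA : 0 < a) {r s : ℝ} (h : r • a ≤ s • a) : r ≤ s := by
  by_contra hrs
  push_neg at hrs
  have h1 : (0:G) ≤ (r - s) • a := aux_smul_nonneg (by linarith) hA.le
  have h2 : (r - s) • a ≤ 0 := by rw [sub_smul]; exact sub_nonpos.2 h
  have h3 : (r - s) • a = 0 := le_antisymm h2 h1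
  rcases smul_eq_zero.1 h3 with h4 | h4
  · have : r = s := by linarith [sub_eq_zero.1 h4]
    linarith
  · exact hA.ne' h4

lemma aux_pos_functional_sep (q : G) (hq : 0 ≤ q) (hne : q ≠ 0) :
    ∃ f : G →L[ℝ] ℝ, (∀ x : G, 0 ≤ x → 0 ≤ f x) ∧ 0 < f q := by
  have hconv : Convex ℝ {x : G | 0 ≤ x} := fun x hx y hy s t hs ht _ =>
    add_nonneg (aux_smul_nonneg hs hx) (aux_smul_nonneg ht hy)
  have hnot : -q ∉ {x : G | 0 ≤ x} := fun h =>
    hne (le_antisymm (neg_nonneg.1 h) hq)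
  obtain ⟨f, u, hfs, hfx⟩ := geometric_hahn_banach_closed_point hconv isClosed_nonneg hnot
  have hu : 0 < u := by simpa using hfs 0 le_rfl
  have hfpos : ∀ x : G, 0 ≤ x → f x ≤ 0 := by
    intro x hx
    by_contra hpos
    push_neg at hpos
    have ht : (0:ℝ) < (u + 1) / f x := by positivity
    have hmem : (0:G) ≤ ((u + 1) / f x) • x := aux_smul_nonneg ht.le hx
    have := hfs _ hmem
    rw [map_smul] at this
    have : (u + 1) / f x * f x < u := this
    rw [div_mul_cancel₀ _ (ne_of_gt hpos)] at this
    linarith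
  refine ⟨-f, fun x hx => by simpa using hfpos x hx, ?_⟩
  have : u < f (-q) := hfx
  rw [map_neg] at this
  simp only [ContinuousLinearMap.neg_apply]
  linarith

lemma aux_interval_approx {G : Type*} [NormedAddCommGroup G] [Lattice G] [HasSolidNorm G] [IsOrderedAddMonoid G] [NormedSpace ℝ G]
    (hat : ∀ x : G, 0 < x → ∃ a : G, (0 < a ∧ ∀ b : G, 0 ≤ b → b ≤ a → ∃ t : ℝ, b = t • a) ∧ a ≤ x)
    (hoc : ∀ S : Set G, S.Nonempty → DirectedOn (fun a b => b ≤ a) S → IsGLB S 0 →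
      sInf ((fun y => ‖y‖) '' S) = 0)
    (e : G) (he : 0 ≤ e) {ε : ℝ} (hε : 0 < ε) :
    ∃ v : G, 0 ≤ v ∧ v ≤ e ∧ IsCompact (Set.Icc 0 v) ∧ ‖e - v‖ < ε := by
  set V : Set G := {v | 0 ≤ v ∧ v ≤ e ∧ IsCompact (Set.Icc 0 v)} with hV
  have h0V : (0:G) ∈ V := ⟨le_rfl, he, by rw [Set.Icc_self]; exact isCompact_singleton⟩
  set S := (fun v => e - v) '' V with hS
  have hSne : S.Nonempty := ⟨e - 0, 0, h0V, rfl⟩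
  have hdir : DirectedOn (fun a b => b ≤ a) S := by
    rintro _ ⟨v1, hv1, rfl⟩ _ ⟨v2, hv2, rfl⟩
    refine ⟨e - (v1 ⊔ v2), ⟨v1 ⊔ v2, ⟨le_sup_left.trans' hv1.1, sup_le hv1.2.1 hv2.2.1, ?_⟩, rfl⟩,
      sub_le_sub_left le_sup_left e, sub_le_sub_left le_sup_right e⟩
    have hsub : Set.Icc (0:G) (v1 ⊔ v2) ⊆ Set.Icc 0 v1 + Set.Icc 0 v2 := by
      rintro x ⟨hx0, hxle⟩
      refine Set.mem_add.2 ⟨x ⊓ v1, ⟨le_inf hx0 hv1.1, inf_le_right⟩, x - x ⊓ v1, ⟨?_, ?_⟩, ?_⟩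
      · exact sub_nonneg.2 inf_le_left
      · have h1 : x - x ⊓ v1 = (x - v1)⁺ := by
          rw [inf_eq_sub_posPart_sub]; abel
        have h2 : x ≤ v1 + v2 :=
          hxle.trans (sup_le (le_add_of_nonneg_right hv2.1) (le_add_of_nonneg_left hv1.1))
        rw [h1]
        calc (x - v1)⁺ ≤ (v1 + v2 - v1)⁺ := posPart_mono (sub_le_sub_right h2 v1)
          _ = v2 := by rw [add_sub_cancel_left]; exact posPart_eq_self.2 hv2.1
      · abel
    exact (hv1.2.2.add hv2.2.2).of_isClosed_subset isClosed_Icc hsub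
  have hglb : IsGLB S 0 := by
    constructor
    · rintro _ ⟨v, hv, rfl⟩; exact sub_nonneg.2 hv.2.1
    · intro c hc
      by_contra hc0
      have hcpos : 0 < c⁺ :=
        lt_of_le_of_ne (posPart_nonneg c) (fun h => hc0 (posPart_eq_zero.1 h.symm))
      obtain ⟨A, ⟨hA0, hAatom⟩, hAle⟩ := hat c⁺ hcpos
      have hce : c ≤ e := by simpa using hc ⟨0, h0V, rfl⟩
      have hcpe : c⁺ ≤ e := sup_le hce he
      set T : Set ℝ := {t | 0 ≤ t ∧ t • A ≤ e} with hT
      have h1T : (1:ℝ) ∈ T := ⟨zero_le_one, by rw [one_smul]; exact hAle.trans hcpe⟩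
      have hAnorm : 0 < ‖A‖ := norm_pos_iff.2 hA0.ne'
      have hTbdd : BddAbove T := by
        refine ⟨‖e‖ / ‖A‖, fun t ht => ?_⟩
        have h1 : ‖t • A‖ ≤ ‖e‖ := aux_norm_le_of_le (aux_smul_nonneg ht.1 hA0.le) ht.2
        rw [norm_smul, Real.norm_eq_abs, abs_of_nonneg ht.1] at h1
        rw [le_div_iff₀ hAnorm]
        exact h1
      set tstar := sSup T with htstar
      have hts1 : (1:ℝ) ≤ tstar := le_csSup hTbdd h1T
      have hts0 : (0:ℝ) ≤ tstar := zero_le_one.trans hts1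
      have htsa : tstar • A ≤ e := by
        have hclosed : IsClosed {t : ℝ | t • A ≤ e} :=
          IsClosed.preimage (continuous_id.smul continuous_const) isClosed_Iic
        have hmem : tstar ∈ closure T :=
          (isLUB_csSup ⟨1, h1T⟩ hTbdd).mem_closure ⟨1, h1T⟩
        exact closure_minimal (fun t ht => ht.2) hclosed hmem
      have himg : Set.Icc (0:G) (tstar • A) = (fun s : ℝ => s • A) '' Set.Icc 0 tstar := by
        ext x
        constructor
        · rintro ⟨hx0, hxle⟩
          have htpos : (0:ℝ) < tstar := lt_of_lt_of_le zero_lt_one hts1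
          have hb0 : (0:G) ≤ tstar⁻¹ • x := aux_smul_nonneg (by positivity) hx0
          have hble : tstar⁻¹ • x ≤ A := by
            have := aux_smul_mono_vec (inv_nonneg.2 hts0) hxle
            rwa [inv_smul_smul₀ htpos.ne'] at this
          obtain ⟨s, hs⟩ := hAatom _ hb0 hble
          have hx : x = (tstar * s) • A := by
            have := congrArg (fun z => tstar • z) hs
            rw [smul_inv_smul₀ htpos.ne'] at this
            rw [this, smul_smul]
          refine ⟨tstar * s, ⟨?_, ?_⟩, hx.symm⟩
          · exact aux_smul_coeff_le hA0 (by rw [zero_smul, ← hx]; exact hx0)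
          · exact aux_smul_coeff_le hA0 (by rw [← hx]; exact hxle)
        · rintro ⟨s, ⟨hs0, hsle⟩, rfl⟩
          exact ⟨aux_smul_nonneg hs0 hA0.le, aux_smul_le_smul hsle hA0.le⟩
      have hVmem : tstar • A ∈ V := by
        refine ⟨aux_smul_nonneg hts0 hA0.le, htsa, ?_⟩
        rw [himg]
        exact isCompact_Icc.image (continuous_id.smul continuous_const)
      have hcle : c ≤ e - tstar • A := hc ⟨_, hVmem, rfl⟩
      have hcple : c⁺ ≤ e - tstar • A := sup_le hcle (sub_nonneg.2 htsa)
      have hAe : tstar • A + A ≤ e := by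
        have := hAle.trans hcple
        exact le_sub_iff_add_le.1 (by rwa [le_sub_comm] at this)
      have hmemT : tstar + 1 ∈ T := by
        refine ⟨add_nonneg hts0 zero_le_one, ?_⟩
        rw [add_smul, one_smul]
        exact hAe
      have hfin := le_csSup hTbdd hmemT
      exact absurd hfin (not_le.2 (lt_add_of_pos_right _ zero_lt_one))
  have hnorm := hoc S hSne hdir hglb
  have hbddB : BddBelow ((fun y => ‖y‖) '' S) := ⟨0, by rintro _ ⟨x, _, rfl⟩; exact norm_nonneg x⟩
  have hlt : sInf ((fun y => ‖y‖) '' S) < ε := by rw [hnorm]; exact hε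
  obtain ⟨r, ⟨w, ⟨v, hvV, rfl⟩, rfl⟩, hrε⟩ := (csInf_lt_iff hbddB (hSne.image _)).1 hlt
  exact ⟨v, hvV.1, hvV.2.1, hvV.2.2, hrε⟩

end Helpers2

section Defs

variable {E F : Type*} [NormedAddCommGroup E] [Lattice E] [HasSolidNorm E] [IsOrderedAddMonoid E] [NormedSpace ℝ E]
  [NormedAddCommGroup F] [Lattice F] [HasSolidNorm F] [IsOrderedAddMonoid F] [NormedSpace ℝ F]

/-- `P` is compact: the image of the closed unit ball is relatively norm compact. -/
def IsCompactPoly (P : E → F) : Prop :=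
  IsCompact (closure (P '' closedBall (0 : E) 1))

/-- An atom of a Banach lattice. -/
def IsLatAtom {G : Type*} [NormedAddCommGroup G] [Lattice G] [HasSolidNorm G] [IsOrderedAddMonoid G] [NormedSpace ℝ G] (a : G) : Prop :=
  0 < a ∧ ∀ b : G, 0 ≤ b → b ≤ a → ∃ t : ℝ, b = t • a

/-- `G` is atomic: every strictly positive element dominates an atom. -/
def LatAtomic (G : Type*) [NormedAddCommGroup G] [Lattice G] [HasSolidNorm G] [IsOrderedAddMonoid G] [NormedSpace ℝ G] : Prop :=
  ∀ x : G, 0 < x → ∃ a : G, IsLatAtom a ∧ a ≤ x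

/-- `G` has order continuous norm: every downward directed subset with greatest lower
bound `0` has infimum of norms equal to `0`. -/
def HasOCNorm (G : Type*) [NormedAddCommGroup G] [Lattice G] [HasSolidNorm G] [IsOrderedAddMonoid G] : Prop :=
  ∀ S : Set G, S.Nonempty → DirectedOn (fun a b => b ≤ a) S → IsGLB S 0 →
    sInf ((fun y => ‖y‖) '' S) = 0

end Defs

theorem statement18 {E F : Type*} [NormedAddCommGroup E] [Lattice E] [HasSolidNorm E] [IsOrderedAddMonoid E] [NormedSpace ℝ E] [CompleteSpace E]
    [NormedAddCommGroup F] [Lattice F] [HasSolidNorm F] [IsOrderedAddMonoid F] [NormedSpace ℝ F] [CompleteSpace F]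
    (n : ℕ) (hn : 1 ≤ n)
    (hFatomic : LatAtomic F) (hFoc : HasOCNorm F)
    (xs : ℕ → (E →L[ℝ] ℝ))
    (hxspos : ∀ k, ∀ x : E, 0 ≤ x → 0 ≤ xs k x)
    (hxsnorm : ∀ k, ‖xs k‖ = 1)
    (hxswstar : ∀ x : E, Tendsto (fun k => xs k x) atTop (nhds 0))
    (y : ℕ → F) (hypos : ∀ k, 0 ≤ y k)
    (a b : ℝ) (ha : 0 < a) (hab : a ≤ b)
    -- (y_k) is equivalent to the canonical basis of c₀
    (hbasis : ∀ (m : ℕ) (c : Fin (m + 1) → ℝ),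
      a * (Finset.univ.sup' Finset.univ_nonempty fun k : Fin (m + 1) => |c k|) ≤
          ‖∑ k : Fin (m + 1), c k • y (k : ℕ)‖ ∧
      ‖∑ k : Fin (m + 1), c k • y (k : ℕ)‖ ≤
          b * (Finset.univ.sup' Finset.univ_nonempty fun k : Fin (m + 1) => |c k|)) :
    ∃ P : E → F,
      (∀ x : E, Tendsto (fun m => ∑ k ∈ Finset.range m, (xs k x) ^ n • y k)
        atTop (nhds (P x))) ∧
      IsPosPoly n P ∧ ¬ IsCompactPoly P := by
  have hb0 : (0:ℝ) < b := lt_of_lt_of_le ha hab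
  -- upper bound on partial sums
  have hbound : ∀ (c : ℕ → ℝ) (N : ℕ) (M : ℝ), 0 ≤ M → (∀ k, k < N → |c k| ≤ M) →
      ‖∑ k ∈ Finset.range N, c k • y k‖ ≤ b * M := by
    intro c N M hM hc
    cases N with
    | zero => simpa using mul_nonneg hb0.le hM
    | succ m =>
      have h1 := (hbasis m (fun k => c k)).2
      rw [Fin.sum_univ_eq_sum_range (fun k => c k • y k)] at h1
      refine h1.trans (mul_le_mul_of_nonneg_left ?_ hb0.le)
      exact Finset.sup'_le _ _ fun i _ => hc i i.isLt
  -- lower bound: each ‖y k‖ ≥ a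
  have hlow : ∀ k, a ≤ ‖y k‖ := by
    intro k
    have h1 := (hbasis k (fun j => if (j : ℕ) = k then (1:ℝ) else 0)).1
    have hsum : ∑ j : Fin (k + 1), (if (j : ℕ) = k then (1:ℝ) else 0) • y (j : ℕ) = y k := by
      rw [Finset.sum_eq_single (⟨k, Nat.lt_succ_self k⟩ : Fin (k + 1))]
      · simp
      · intro j _ hj
        have : (j : ℕ) ≠ k := by
          intro h; apply hj; exact Fin.ext h
        simp [this]
      · simp
    have hsup : (Finset.univ.sup' Finset.univ_nonempty
        fun j : Fin (k + 1) => |if (j : ℕ) = k then (1:ℝ) else 0|) = 1 := by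
      apply le_antisymm
      · exact Finset.sup'_le _ _ fun j _ => by split <;> simp
      · refine Finset.le_sup'_of_le _ (Finset.mem_univ (⟨k, Nat.lt_succ_self k⟩ : Fin (k+1))) ?_
        simp
    rw [hsum, hsup, mul_one] at h1
    exact h1
  -- convergence of series with null coefficients
  have hcauchy : ∀ c : ℕ → ℝ, Tendsto c atTop (𝓝 0) →
      ∃ L : F, Tendsto (fun m => ∑ k ∈ Finset.range m, c k • y k) atTop (𝓝 L) := by
    intro c hc
    apply cauchySeq_tendsto_of_complete
    rw [Metric.cauchySeq_iff']
    intro ε hε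
    obtain ⟨N, hN⟩ := (Metric.tendsto_atTop.1 hc) (ε / (2 * b)) (by positivity)
    refine ⟨N, fun m hm => ?_⟩
    have hIco : ∑ k ∈ Finset.range m, c k • y k - ∑ k ∈ Finset.range N, c k • y k
        = ∑ k ∈ Finset.Ico N m, c k • y k := (Finset.sum_Ico_eq_sub _ hm).symm
    have hIco2 : ∑ k ∈ Finset.Ico N m, c k • y k
        = ∑ k ∈ Finset.range m, (if N ≤ k then c k else 0) • y k := by
      rw [Finset.range_eq_Ico, ← Finset.sum_Ico_consecutive _ (Nat.zero_le N) hm]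
      have h2 : ∑ k ∈ Finset.Ico 0 N, (if N ≤ k then c k else 0) • y k = 0 :=
        Finset.sum_eq_zero fun k hk => by
          rw [if_neg (not_le.2 (Finset.mem_Ico.1 hk).2), zero_smul]
      have h3 : ∑ k ∈ Finset.Ico N m, (if N ≤ k then c k else 0) • y k
          = ∑ k ∈ Finset.Ico N m, c k • y k :=
        Finset.sum_congr rfl fun k hk => by rw [if_pos (Finset.mem_Ico.1 hk).1]
      rw [h2, h3, zero_add]
    have hle : ‖∑ k ∈ Finset.Ico N m, c k • y k‖ ≤ b * (ε / (2 * b)) := by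
      rw [hIco2]
      refine hbound _ _ _ (by positivity) fun k _ => ?_
      split
      · next h =>
        have := hN k h
        rw [Real.dist_eq, sub_zero] at this
        exact this.le
      · simp; positivity
    rw [dist_eq_norm, hIco]
    calc ‖∑ k ∈ Finset.Ico N m, c k • y k‖ ≤ b * (ε / (2 * b)) := hle
      _ = ε / 2 := by field_simp
      _ < ε := by linarith
  -- the coefficients of the multilinear map
  set cc : (Fin n → E) → ℕ → ℝ := fun v k => ∏ i, xs k (v i) with hcc
  have i0 : Fin n := ⟨0, hn⟩
  have hccabs : ∀ (v : Fin n → E) (k : ℕ) (i : Fin n),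
      |cc v k| ≤ |xs k (v i)| * ∏ j ∈ Finset.univ.erase i, ‖v j‖ := by
    intro v k i
    rw [hcc]
    simp only
    rw [Finset.abs_prod, ← Finset.mul_prod_erase _ _ (Finset.mem_univ i)]
    refine mul_le_mul_of_nonneg_left ?_ (abs_nonneg _)
    refine Finset.prod_le_prod (fun j _ => abs_nonneg _) fun j _ => ?_
    calc |xs k (v j)| ≤ ‖xs k‖ * ‖v j‖ := (xs k).le_opNorm (v j)
      _ = ‖v j‖ := by rw [hxsnorm, one_mul]
  have hcc0 : ∀ v : Fin n → E, Tendsto (cc v) atTop (𝓝 0) := by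
    intro v
    apply squeeze_zero_norm (fun k => (Real.norm_eq_abs _ ▸ hccabs v k i0))
    have h1 : Tendsto (fun k => |xs k (v i0)|) atTop (𝓝 0) := by
      have := (hxswstar (v i0)).abs
      simpa using this
    have := h1.mul_const (∏ j ∈ Finset.univ.erase i0, ‖v j‖)
    simpa using this
  choose Tf hTf using fun v => hcauchy (cc v) (hcc0 v)
  -- basic rewriting of partial sums under update
  have hupd : ∀ (k : ℕ) (v : Fin n → E) (i : Fin n) (z : E),
      cc (Function.update v i z) k = xs k z * ∏ j ∈ Finset.univ.erase i, xs k (v j) := by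
    intro k v i z
    rw [hcc]
    simp only
    have heq : (fun j => xs k (Function.update v i z j))
        = Function.update (fun j => xs k (v j)) i (xs k z) := by
      funext j
      by_cases h : j = i <;> simp [Function.update_apply, h]
    rw [heq, Finset.prod_update_of_mem (Finset.mem_univ i), Finset.erase_eq]
  have hadd : ∀ (v : Fin n → E) (i : Fin n) (x z : E),
      Tf (Function.update v i (x + z))
        = Tf (Function.update v i x) + Tf (Function.update v i z) := by
    intro v i x z
    refine tendsto_nhds_unique (hTf _) ?_
    have h2 := (hTf (Function.update v i x)).add (hTf (Function.update v i z))
    have h3 : (fun m => (∑ k ∈ Finset.range m, cc (Function.update v i x) k • y k)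
        + ∑ k ∈ Finset.range m, cc (Function.update v i z) k • y k)
        = fun m => ∑ k ∈ Finset.range m, cc (Function.update v i (x + z)) k • y k := by
      funext m
      rw [← Finset.sum_add_distrib]
      refine Finset.sum_congr rfl fun k _ => ?_
      rw [hupd, hupd, hupd, map_add, add_mul, add_smul]
    rw [h3] at h2
    exact h2
  have hsmul : ∀ (v : Fin n → E) (i : Fin n) (c : ℝ) (x : E),
      Tf (Function.update v i (c • x)) = c • Tf (Function.update v i x) := by
    intro v i c x
    refine tendsto_nhds_unique (hTf _) ?_
    have h2 := (hTf (Function.update v i x)).const_smul c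
    have h3 : (fun m => c • ∑ k ∈ Finset.range m, cc (Function.update v i x) k • y k)
        = fun m => ∑ k ∈ Finset.range m, cc (Function.update v i (c • x)) k • y k := by
      funext m
      rw [Finset.smul_sum]
      refine Finset.sum_congr rfl fun k _ => ?_
      rw [hupd, hupd, map_smul, smul_eq_mul, smul_smul, mul_assoc]
    rw [h3] at h2
    exact h2
  have hTbound : ∀ v : Fin n → E, ‖Tf v‖ ≤ b * ∏ i, ‖v i‖ := by
    intro v
    refine le_of_tendsto (hTf v).norm (Eventually.of_forall fun m => ?_)
    refine hbound _ _ _ (Finset.prod_nonneg fun i _ => norm_nonneg _) fun k _ => ?_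
    rw [hcc]
    simp only
    rw [Finset.abs_prod]
    refine Finset.prod_le_prod (fun i _ => abs_nonneg _) fun i _ => ?_
    calc |xs k (v i)| ≤ ‖xs k‖ * ‖v i‖ := (xs k).le_opNorm (v i)
      _ = ‖v i‖ := by rw [hxsnorm, one_mul]
  have hinst : ∀ (inst : DecidableEq (Fin n)) (v : Fin n → E) (i : Fin n) (z : E),
      @Function.update _ _ inst v i z = Function.update v i z := by
    intro inst v i z
    obtain rfl := Subsingleton.elim inst (instDecidableEqFin n)
    rfl
  set T0 : MultilinearMap ℝ (fun _ : Fin n => E) F :=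
    { toFun := Tf
      map_update_add' := fun {inst} v i x z => by
        obtain rfl := Subsingleton.elim inst (instDecidableEqFin n)
        exact hadd v i x z
      map_update_smul' := fun {inst} v i c x => by
        obtain rfl := Subsingleton.elim inst (instDecidableEqFin n)
        exact hsmul v i c x } with hT0
  set T : ContinuousMultilinearMap ℝ (fun _ : Fin n => E) F :=
    T0.mkContinuous b hTbound with hT
  have hTapp : ∀ v, T v = Tf v := fun v => rfl
  have hsymm : ∀ (v : Fin n → E) (σ : Equiv.Perm (Fin n)), Tf (v ∘ σ) = Tf v := by
    intro v σ
    refine tendsto_nhds_unique (hTf _) ?_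
    have h3 : (fun m => ∑ k ∈ Finset.range m, cc v k • y k)
        = fun m => ∑ k ∈ Finset.range m, cc (v ∘ σ) k • y k := by
      funext m
      refine Finset.sum_congr rfl fun k _ => ?_
      exact (congrArg (· • y k) (Equiv.prod_comp σ fun i => xs k (v i))).symm
    rw [← h3]
    exact hTf v
  have hposT : ∀ v : Fin n → E, (∀ i, 0 ≤ v i) → 0 ≤ Tf v := by
    intro v hv
    refine ge_of_tendsto (hTf v) (Eventually.of_forall fun m => ?_)
    refine Finset.sum_nonneg fun k _ => ?_
    refine aux_smul_nonneg ?_ (hypos k)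
    exact Finset.prod_nonneg fun i _ => hxspos k (v i) (hv i)
  -- the polynomial
  set P : E → F := fun x => Tf (fun _ => x) with hP
  have hPconv : ∀ x : E, Tendsto (fun m => ∑ k ∈ Finset.range m, (xs k x) ^ n • y k)
      atTop (𝓝 (P x)) := by
    intro x
    have h1 := hTf (fun _ => x)
    have h2 : (fun m => ∑ k ∈ Finset.range m, cc (fun _ => x) k • y k)
        = fun m => ∑ k ∈ Finset.range m, (xs k x) ^ n • y k := by
      funext m
      refine Finset.sum_congr rfl fun k _ => ?_
      rw [hcc]
      simp only
      rw [Finset.prod_const, Finset.card_univ, Fintype.card_fin]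
    rw [h2] at h1
    exact h1
  refine ⟨P, hPconv, ⟨T, fun v σ => hsymm v σ, fun v hv => hposT v hv, fun x => rfl⟩, ?_⟩
  -- noncompactness
  intro hcpt
  -- choose positive norming vectors
  have hxk : ∀ k, ∃ x : E, 0 ≤ x ∧ ‖x‖ ≤ 1 ∧ 1/2 ≤ xs k x := by
    intro k
    obtain ⟨z, hz1, hz2⟩ := (xs k).exists_lt_apply_of_lt_opNorm
      (r := 1/2) (by rw [hxsnorm k]; norm_num)
    refine ⟨|z|, abs_nonneg z, by rw [norm_abs_eq_norm]; exact hz1.le, ?_⟩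
    have h1 : xs k z ≤ xs k |z| := by
      have := hxspos k (|z| - z) (sub_nonneg.2 (le_abs_self z))
      rw [map_sub] at this
      linarith
    have h2 : -(xs k z) ≤ xs k |z| := by
      have h3 : -z ≤ |z| := by
        rw [← abs_neg z]
        exact le_abs_self (-z)
      have := hxspos k (|z| - (-z)) (sub_nonneg.2 h3)
      rw [map_sub, map_neg] at this
      linarith
    have h4 : |xs k z| ≤ xs k |z| := abs_le.2 ⟨by linarith, h1⟩
    rw [Real.norm_eq_abs] at hz2
    linarith
  choose xk hxk0 hxk1 hxkh using hxk
  -- P (xk k) dominates (1/2)^n • y k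
  have hPz : ∀ k, ((1:ℝ)/2) ^ n • y k ≤ P (xk k) := by
    intro k
    have hstep : (xs k (xk k)) ^ n • y k ≤ P (xk k) := by
      refine ge_of_tendsto (hPconv (xk k)) ?_
      filter_upwards [eventually_ge_atTop (k + 1)] with m hm
      refine Finset.single_le_sum (f := fun j => (xs j (xk k)) ^ n • y j) ?_ ?_
      · intro j _
        exact aux_smul_nonneg (pow_nonneg (hxspos j (xk k) (hxk0 k)) n) (hypos j)
      · exact Finset.mem_range.2 hm
    refine le_trans ?_ hstep
    exact aux_smul_le_smul (pow_le_pow_left₀ (by norm_num) (hxkh k) n) (hypos k)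
  -- extract a convergent subsequence from the compact closure
  have hmem : ∀ k, P (xk k) ∈ closure (P '' closedBall (0:E) 1) := fun k =>
    subset_closure ⟨xk k, by rw [mem_closedBall, dist_zero_right]; exact hxk1 k, rfl⟩
  obtain ⟨u, _, φ, hφ, hconv⟩ := hcpt.tendsto_subseq hmem
  set c2 : ℝ := ((1:ℝ)/2) ^ n with hc2def
  have hc2 : 0 < c2 := by positivity
  set e : F := u⁺ with he_def
  have he : 0 ≤ e := posPart_nonneg u
  -- y is weakly null
  have hynull : ∀ f : F →L[ℝ] ℝ, Tendsto (fun k => f (y k)) atTop (𝓝 0) := by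
    intro f
    have hsummable : Summable fun k => |f (y k)| := by
      apply summable_of_sum_range_le (c := ‖f‖ * (b * 1)) (fun k => abs_nonneg _)
      intro N
      have heq : ∑ k ∈ Finset.range N, |f (y k)|
          = f (∑ k ∈ Finset.range N, (if f (y k) < 0 then (-1:ℝ) else 1) • y k) := by
        rw [map_sum]
        refine Finset.sum_congr rfl fun k _ => ?_
        rw [map_smul, smul_eq_mul]
        split
        · next h => rw [abs_of_neg h]; ring
        · next h => rw [abs_of_nonneg (not_lt.1 h)]; ring
      rw [heq]
      calc f (∑ k ∈ Finset.range N, (if f (y k) < 0 then (-1:ℝ) else 1) • y k)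
          ≤ ‖f (∑ k ∈ Finset.range N, (if f (y k) < 0 then (-1:ℝ) else 1) • y k)‖ :=
            le_abs_self _
        _ ≤ ‖f‖ * ‖∑ k ∈ Finset.range N, (if f (y k) < 0 then (-1:ℝ) else 1) • y k‖ :=
            f.le_opNorm _
        _ ≤ ‖f‖ * (b * 1) := by
            refine mul_le_mul_of_nonneg_left ?_ (norm_nonneg f)
            refine hbound _ _ _ zero_le_one fun k _ => ?_
            split <;> simp
    have habs := hsummable.tendsto_atTop_zero
    exact squeeze_zero_norm (fun k => le_of_eq (Real.norm_eq_abs _)) habs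
  -- the cut-off sequence
  set w : ℕ → F := fun j => (c2 • y (φ j)) ⊓ e with hw_def
  have hw0 : ∀ j, 0 ≤ w j := fun j =>
    le_inf (aux_smul_nonneg hc2.le (hypos _)) he
  have hposPart_le_abs : ∀ x : F, x⁺ ≤ |x| := fun x =>
    sup_le (le_abs_self x) (abs_nonneg x)
  have hdiff : ∀ j, ‖c2 • y (φ j) - w j‖ ≤ ‖P (xk (φ j)) - u‖ := by
    intro j
    have h1 : c2 • y (φ j) - w j = (c2 • y (φ j) - e)⁺ := by
      rw [hw_def]
      simp only
      rw [inf_eq_sub_posPart_sub]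
      abel
    have h2 : (c2 • y (φ j) - e)⁺ ≤ (P (xk (φ j)) - u)⁺ := by
      refine posPart_mono (sub_le_sub ?_ ?_)
      · exact hPz (φ j)
      · exact le_posPart u
    have h3 : (P (xk (φ j)) - u)⁺ ≤ |P (xk (φ j)) - u| := hposPart_le_abs _
    rw [h1, ← norm_abs_eq_norm (P (xk (φ j)) - u)]
    exact aux_norm_le_of_le (posPart_nonneg _) (h2.trans h3)
  have hdiff0 : Tendsto (fun j => ‖c2 • y (φ j) - w j‖) atTop (𝓝 0) := by
    refine squeeze_zero (fun j => norm_nonneg _) hdiff ?_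
    rw [← tendsto_iff_norm_sub_tendsto_zero]
    exact hconv
  set ε : ℝ := c2 * a / 4 with hεdef
  have hε : 0 < ε := by positivity
  obtain ⟨v, hv0, hve, hvcpt, hvnear⟩ := aux_interval_approx hFatomic hFoc e he hε
  set q : ℕ → F := fun j => w j ⊓ v with hq_def
  have hq_in : ∀ j, q j ∈ Set.Icc (0:F) v := fun j =>
    ⟨le_inf (hw0 j) hv0, inf_le_right⟩
  obtain ⟨l, hlIcc, ψ, hψ, hlconv⟩ := hvcpt.tendsto_subseq hq_in
  have hl0 : l = 0 := by
    by_contra hne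
    obtain ⟨f, hfpos, hfl⟩ := aux_pos_functional_sep l hlIcc.1 hne
    have h1 : Tendsto (fun i => f (q (ψ i))) atTop (𝓝 (f l)) :=
      (f.continuous.tendsto l).comp hlconv
    have hmono : ∀ {x z : F}, x ≤ z → f x ≤ f z := by
      intro x z hxz
      have := hfpos (z - x) (sub_nonneg.2 hxz)
      rw [map_sub] at this
      linarith
    have h2 : Tendsto (fun i => f (q (ψ i))) atTop (𝓝 0) := by
      have hup : Tendsto (fun i => c2 * f (y (φ (ψ i)))) atTop (𝓝 (c2 * 0)) := by
        exact (((hynull f).comp hφ.tendsto_atTop).comp hψ.tendsto_atTop).const_mul c2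
      rw [mul_zero] at hup
      refine tendsto_of_tendsto_of_tendsto_of_le_of_le tendsto_const_nhds hup ?_ ?_
      · intro i
        exact hfpos _ (hq_in (ψ i)).1
      · intro i
        have hle1 : q (ψ i) ≤ c2 • y (φ (ψ i)) := inf_le_left.trans inf_le_left
        have := hmono hle1
        rw [map_smul, smul_eq_mul] at this
        exact this
    exact absurd (tendsto_nhds_unique h1 h2) (ne_of_gt hfl)
  have hqnorm : Tendsto (fun i => ‖q (ψ i)‖) atTop (𝓝 0) := by
    have := (continuous_norm.tendsto l).comp hlconv
    rw [hl0, norm_zero] at this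
    exact this
  have hwq : ∀ j, ‖w j - q j‖ ≤ ‖e - v‖ := by
    intro j
    have h1 : w j - q j = (w j - v)⁺ := by
      rw [hq_def]
      simp only
      rw [inf_eq_sub_posPart_sub]
      abel
    have h2 : (w j - v)⁺ ≤ (e - v)⁺ :=
      posPart_mono (sub_le_sub_right inf_le_right v)
    have h3 : (e - v)⁺ = e - v := posPart_eq_self.2 (sub_nonneg.2 hve)
    rw [h1]
    exact aux_norm_le_of_le (posPart_nonneg _) (h2.trans h3.le)
  have h3 : ∀ᶠ i in atTop, ‖q (ψ i)‖ < ε := hqnorm.eventually_lt_const hε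
  have h4 : ∀ᶠ i in atTop, ‖c2 • y (φ (ψ i)) - w (ψ i)‖ < ε :=
    (hdiff0.comp hψ.tendsto_atTop).eventually_lt_const hε
  obtain ⟨i, h3i, h4i⟩ := (h3.and h4).exists
  have hznorm : c2 * a ≤ ‖c2 • y (φ (ψ i))‖ := by
    rw [norm_smul, Real.norm_eq_abs, abs_of_pos hc2]
    exact mul_le_mul_of_nonneg_left (hlow _) hc2.le
  have hsplit : c2 • y (φ (ψ i))
      = (c2 • y (φ (ψ i)) - w (ψ i)) + (w (ψ i) - q (ψ i)) + q (ψ i) := by abel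
  have htri : ‖c2 • y (φ (ψ i))‖
      ≤ ‖c2 • y (φ (ψ i)) - w (ψ i)‖ + ‖w (ψ i) - q (ψ i)‖ + ‖q (ψ i)‖ := by
    conv_lhs => rw [hsplit]
    exact (norm_add_le _ _).trans (add_le_add_left (norm_add_le _ _) _)
  have hwqi := (hwq (ψ i)).trans_lt hvnear
  have : c2 * a < 3 * ε := by
    calc c2 * a ≤ ‖c2 • y (φ (ψ i))‖ := hznorm
      _ ≤ ‖c2 • y (φ (ψ i)) - w (ψ i)‖ + ‖w (ψ i) - q (ψ i)‖ + ‖q (ψ i)‖ := htri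
      _ < ε + ε + ε := by
          have h5 := hsplit
          linarith [h4i, hwqi, h3i]
      _ = 3 * ε := by ring
    
  rw [hεdef] at this
  linarith
end

section
/- Let n ≥ 1, let E be a Banach lattice and let F be a Banach lattice with order continuous norm. Let (x*_k) be a weak*-null sequence of positive continuous linear functionals on E that is not weakly null, and let (y_k) be a sequence of positive elements of F equivalent to the canonical basis of c0. Then for every x ∈ E the series ∑_{k=1}^∞ (x*_k(x))^n y_k converges in F, the map P(x) = ∑_{k=1}^∞ (x*_k(x))^n y_k is a positive n-homogeneous polynomial from E to F, and P is not weakly compact. -/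
open Filter Topology Metric

section Defs

variable {E F : Type*} [NormedAddCommGroup E] [Lattice E] [HasSolidNorm E] [IsOrderedAddMonoid E] [NormedSpace ℝ E]
  [NormedAddCommGroup F] [Lattice F] [HasSolidNorm F] [IsOrderedAddMonoid F] [NormedSpace ℝ F]

/-- `P` is weakly compact: the image of the closed unit ball is relatively compact in
the weak topology of `F`. -/
def IsWeaklyCompactPoly (P : E → F) : Prop :=
  IsCompact (closure ((toWeakSpace ℝ F) '' (P '' closedBall (0 : E) 1)))

end Defs

section St19Aux

variable {E F : Type*} [NormedAddCommGroup E] [Lattice E] [HasSolidNorm E] [IsOrderedAddMonoid E] [NormedSpace ℝ E]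
  [NormedAddCommGroup F] [Lattice F] [HasSolidNorm F] [IsOrderedAddMonoid F] [NormedSpace ℝ F]

variable {F : Type*} [NormedAddCommGroup F] [Lattice F] [HasSolidNorm F] [IsOrderedAddMonoid F] [NormedSpace ℝ F]

lemma st19_dyadic_smul_nonneg (x : F) (hx : 0 ≤ x) (j p : ℕ) :
    0 ≤ ((p : ℝ) / 2 ^ j) • x := by
  induction j generalizing p with
  | zero =>
      have h : ((p : ℝ) / 2 ^ 0) • x = p • x := by
        rw [pow_zero, div_one, Nat.cast_smul_eq_nsmul]
      rw [h]; exact nsmul_nonneg hx p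
  | succ j ih =>
      apply nsmul_two_semiclosed
      have h : (2 : ℕ) • (((p : ℝ) / 2 ^ (j + 1)) • x) = ((p : ℝ) / 2 ^ j) • x := by
        rw [← Nat.cast_smul_eq_nsmul ℝ, smul_smul]
        congr 1
        push_cast
        ring
      rw [h]; exact ih p

lemma st19_smul_nonneg {r : ℝ} (hr : 0 ≤ r) {x : F} (hx : 0 ≤ x) : 0 ≤ r • x := by
  have hS : IsClosed {t : ℝ | 0 ≤ t • x} := by
    have h1 : IsClosed {z : F | 0 ≤ z} := isClosed_le continuous_const continuous_id
    exact h1.preimage (continuous_id.smul continuous_const)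
  have hmem : ∀ j : ℕ, ((⌈r * 2 ^ j⌉₊ : ℝ) / 2 ^ j) ∈ {t : ℝ | 0 ≤ t • x} :=
    fun j => st19_dyadic_smul_nonneg x hx j _
  have htend : Tendsto (fun j : ℕ => ((⌈r * 2 ^ j⌉₊ : ℝ) / 2 ^ j)) atTop (𝓝 r) := by
    have hle : ∀ j : ℕ, r ≤ ((⌈r * 2 ^ j⌉₊ : ℝ) / 2 ^ j) := by
      intro j
      rw [le_div_iff₀ (by positivity)]
      exact Nat.le_ceil _
    have hge : ∀ j : ℕ, ((⌈r * 2 ^ j⌉₊ : ℝ) / 2 ^ j) ≤ r + (1 / 2) ^ j := by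
      intro j
      rw [div_le_iff₀ (by positivity)]
      have := (Nat.ceil_lt_add_one (by positivity : (0:ℝ) ≤ r * 2 ^ j)).le
      calc (⌈r * 2 ^ j⌉₊ : ℝ) ≤ r * 2 ^ j + 1 := this
        _ = (r + (1/2)^j) * 2 ^ j := by
            rw [add_mul]
            congr 1
            rw [div_pow, one_pow, div_mul_cancel₀]
            positivity
    refine tendsto_of_tendsto_of_tendsto_of_le_of_le tendsto_const_nhds ?_ hle hge
    have : Tendsto (fun j : ℕ => r + (1/2 : ℝ) ^ j) atTop (𝓝 (r + 0)) :=
      tendsto_const_nhds.add (tendsto_pow_atTop_nhds_zero_of_lt_one (by norm_num) (by norm_num))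
    simpa using this
  exact hS.mem_of_tendsto htend (Filter.Eventually.of_forall hmem)

lemma st19_smul_le_smul {r s : ℝ} (h : r ≤ s) {x : F} (hx : 0 ≤ x) : r • x ≤ s • x := by
  have := st19_smul_nonneg (sub_nonneg.2 h) hx
  rw [sub_smul] at this
  exact sub_nonneg.1 this


variable {F : Type*} [NormedAddCommGroup F] [Lattice F] [HasSolidNorm F] [IsOrderedAddMonoid F] [NormedSpace ℝ F]

lemma st19_oc (hFoc : HasOCNorm F) (s : ℕ → F) (hmono : Monotone s) (z : F)
    (hub : ∀ m, s m ≤ z) {ε : ℝ} (hε : 0 < ε) : ∃ m, ‖s (m + 1) - s m‖ < ε := by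
  set UB := upperBounds (Set.range s) with hUB
  set S : Set F := {v | ∃ d ∈ UB, ∃ m, v = d - s m} with hS
  have hzUB : z ∈ UB := by rintro _ ⟨m, rfl⟩; exact hub m
  have hne : S.Nonempty := ⟨z - s 0, z, hzUB, 0, rfl⟩
  have hdir : DirectedOn (fun a b => b ≤ a) S := by
    rintro _ ⟨d, hd, m, rfl⟩ _ ⟨d', hd', m', rfl⟩
    refine ⟨(d ⊓ d') - s (max m m'), ⟨d ⊓ d', ?_, max m m', rfl⟩, ?_, ?_⟩
    · rintro _ ⟨k, rfl⟩; exact le_inf (hd ⟨k, rfl⟩) (hd' ⟨k, rfl⟩)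
    · exact sub_le_sub inf_le_left (hmono (le_max_left _ _))
    · exact sub_le_sub inf_le_right (hmono (le_max_right _ _))
  have hglb : IsGLB S 0 := by
    constructor
    · rintro _ ⟨d, hd, m, rfl⟩; exact sub_nonneg.2 (hd ⟨m, rfl⟩)
    · intro w hw
      have key : ∀ k : ℕ, z - k • w⁺ ∈ UB := by
        intro k; induction k with
        | zero => simpa using hzUB
        | succ k ih =>
            rintro _ ⟨m, rfl⟩
            have h1 : s m ≤ z - k • w⁺ := ih ⟨m, rfl⟩
            have h2 : w ≤ (z - k • w⁺) - s m := hw ⟨z - k • w⁺, ih, m, rfl⟩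
            have h3 : s m ≤ ((z - k • w⁺) - w) ⊓ ((z - k • w⁺) - 0) := by
              refine le_inf ?_ (by simpa using h1)
              have := sub_le_sub_left h2 (z - k • w⁺)
              calc s m = (z - k • w⁺) - ((z - k • w⁺) - s m) := by abel
                _ ≤ (z - k • w⁺) - w := sub_le_sub_left h2 _
            have h4 : ((z - k • w⁺) - w) ⊓ ((z - k • w⁺) - 0) = z - (k + 1) • w⁺ := by
              have hsup : w ⊔ 0 = w⁺ := rfl
              rw [← sub_sup, hsup, succ_nsmul]
              abel
            rw [h4] at h3; exact h3
      have hb : ∀ k : ℕ, k • w⁺ ≤ z - s 0 := by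
        intro k
        have := key k ⟨0, rfl⟩
        calc k • w⁺ = z - (z - k • w⁺) := by abel
          _ ≤ z - s 0 := sub_le_sub_left this z
      have hnorm : ∀ k : ℕ, (k : ℝ) * ‖w⁺‖ ≤ ‖z - s 0‖ := by
        intro k
        have h0 : (0 : F) ≤ k • w⁺ := nsmul_nonneg (posPart_nonneg w) k
        have habs : |(k • w⁺ : F)| ≤ |z - s 0| := by
          rw [abs_of_nonneg h0, abs_of_nonneg (h0.trans (hb k))]
          exact hb k
        have := norm_le_norm_of_abs_le_abs habs
        calc (k : ℝ) * ‖w⁺‖ = ‖k • w⁺‖ := by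
              rw [← Nat.cast_smul_eq_nsmul ℝ, norm_smul, Real.norm_natCast]
          _ ≤ ‖z - s 0‖ := this
      have hwp : ‖w⁺‖ = 0 := by
        by_contra hne0
        have hpos : 0 < ‖w⁺‖ := lt_of_le_of_ne (norm_nonneg _) (Ne.symm hne0)
        obtain ⟨k, hk⟩ := exists_nat_gt (‖z - s 0‖ / ‖w⁺‖)
        have := hnorm k
        rw [div_lt_iff₀ hpos] at hk
        linarith
      have : w⁺ = (0 : F) := norm_eq_zero.1 hwp
      exact posPart_eq_zero.1 this
  have h0 := hFoc S hne hdir hglb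
  have himne : ((fun y => ‖y‖) '' S).Nonempty := hne.image _
  obtain ⟨r, ⟨v, hvS, rfl⟩, hrε⟩ := exists_lt_of_csInf_lt himne (h0 ▸ hε)
  obtain ⟨d, hd, m, rfl⟩ := hvS
  refine ⟨m, ?_⟩
  have h1 : (0:F) ≤ s (m + 1) - s m := sub_nonneg.2 (hmono (Nat.le_succ m))
  have h2 : s (m + 1) - s m ≤ d - s m := sub_le_sub_right (hd ⟨m + 1, rfl⟩) _
  have habs : |s (m + 1) - s m| ≤ |d - s m| := by
    rw [abs_of_nonneg h1, abs_of_nonneg (h1.trans h2)]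
    exact h2
  exact lt_of_le_of_lt (norm_le_norm_of_abs_le_abs habs) hrε


variable {F : Type*} [NormedAddCommGroup F] [Lattice F] [HasSolidNorm F] [IsOrderedAddMonoid F] [NormedSpace ℝ F]

variable (y : ℕ → F) (a b : ℝ)

lemma st19_norm_sum_le (hb : 0 < b)
    (hbasis : ∀ (m : ℕ) (c : Fin (m + 1) → ℝ),
      a * (Finset.univ.sup' Finset.univ_nonempty fun k : Fin (m + 1) => |c k|) ≤
          ‖∑ k : Fin (m + 1), c k • y (k : ℕ)‖ ∧
      ‖∑ k : Fin (m + 1), c k • y (k : ℕ)‖ ≤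
          b * (Finset.univ.sup' Finset.univ_nonempty fun k : Fin (m + 1) => |c k|))
    (s : Finset ℕ) (c : ℕ → ℝ) (t : ℝ) (ht : 0 ≤ t) (hc : ∀ k ∈ s, |c k| ≤ t) :
    ‖∑ k ∈ s, c k • y k‖ ≤ b * t := by
  classical
  rcases s.eq_empty_or_nonempty with rfl | hs
  · simp; positivity
  set m := s.max' hs with hm
  have hsub : s ⊆ Finset.range (m + 1) := by
    intro k hk
    exact Finset.mem_range.2 (Nat.lt_succ_of_le (Finset.le_max' s k hk))
  set c' : ℕ → ℝ := fun k => if k ∈ s then c k else 0 with hc'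
  have hsum : ∑ k ∈ Finset.range (m + 1), c' k • y k = ∑ k ∈ s, c k • y k := by
    rw [← Finset.sum_subset hsub (fun k _ hk => by simp [hc', hk])]
    exact Finset.sum_congr rfl fun k hk => by simp [hc', hk]
  have hfin : ∑ k ∈ Finset.range (m + 1), c' k • y k
      = ∑ k : Fin (m + 1), c' (k : ℕ) • y (k : ℕ) := (Fin.sum_univ_eq_sum_range _ _).symm
  rw [← hsum, hfin]
  refine le_trans (hbasis m fun k => c' (k : ℕ)).2 ?_
  have hsup : (Finset.univ.sup' Finset.univ_nonempty fun k : Fin (m + 1) => |c' (k : ℕ)|) ≤ t := by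
    apply Finset.sup'_le
    intro k _
    by_cases hk : (k : ℕ) ∈ s
    · simpa [hc', hk] using hc _ hk
    · simp [hc', hk, ht]
  exact mul_le_mul_of_nonneg_left hsup hb.le

lemma st19_a_le_norm_y
    (hbasis : ∀ (m : ℕ) (c : Fin (m + 1) → ℝ),
      a * (Finset.univ.sup' Finset.univ_nonempty fun k : Fin (m + 1) => |c k|) ≤
          ‖∑ k : Fin (m + 1), c k • y (k : ℕ)‖ ∧
      ‖∑ k : Fin (m + 1), c k • y (k : ℕ)‖ ≤
          b * (Finset.univ.sup' Finset.univ_nonempty fun k : Fin (m + 1) => |c k|))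
    (k : ℕ) : a ≤ ‖y k‖ := by
  classical
  set c : Fin (k + 1) → ℝ := fun j => if (j : ℕ) = k then 1 else 0 with hcdef
  have hsum : ∑ j : Fin (k + 1), c j • y (j : ℕ) = y k := by
    rw [Fin.sum_univ_eq_sum_range (fun j => (if j = k then (1:ℝ) else 0) • y j)]
    rw [Finset.sum_eq_single_of_mem k (Finset.self_mem_range_succ k)]
    · simp
    · intro j _ hj
      simp [hj]
  have hsup : (Finset.univ.sup' Finset.univ_nonempty fun j : Fin (k + 1) => |c j|) = 1 := by
    apply le_antisymm
    · apply Finset.sup'_le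
      intro j _
      by_cases hj : (j : ℕ) = k <;> simp [hcdef, hj]
    · have := Finset.le_sup' (f := fun j : Fin (k + 1) => |c j|)
        (b := (Fin.last k)) (Finset.mem_univ _)
      refine le_trans ?_ this
      simp [hcdef, Fin.val_last]
  have := (hbasis k c).1
  rw [hsup, hsum, mul_one] at this
  exact this


variable {E : Type*} [NormedAddCommGroup E] [Lattice E] [HasSolidNorm E] [IsOrderedAddMonoid E] [NormedSpace ℝ E]

lemma st19_helly (φ : (E →L[ℝ] ℝ) →L[ℝ] ℝ) (m : ℕ) (fs : Fin m → E →L[ℝ] ℝ)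
    {ε : ℝ} (hε : 0 < ε) :
    ∃ x : E, ‖x‖ ≤ ‖φ‖ + 1 ∧ ∀ j, |fs j x - φ (fs j)| < ε := by
  classical
  set R : ℝ := ‖φ‖ + 1 with hRdef
  have hR : 0 < R := by positivity
  set L : E →ₗ[ℝ] (Fin m → ℝ) :=
    { toFun := fun x j => fs j x
      map_add' := fun x x' => by funext j; simp
      map_smul' := fun r x => by funext j; simp } with hL
  set V : Set (Fin m → ℝ) := L '' (closedBall 0 R) with hV
  set tv : Fin m → ℝ := fun j => φ (fs j) with htvdef
  have htv : tv ∈ closure V := by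
    by_contra htv
    have hVconv : Convex ℝ (closure V) :=
      ((convex_closedBall (0 : E) R).linear_image L).closure
    obtain ⟨f, u, hfV, hfu⟩ := geometric_hahn_banach_closed_point hVconv isClosed_closure htv
    set c : Fin m → ℝ := fun j => f (fun t => if j = t then (1 : ℝ) else 0) with hc
    have hf : ∀ w : Fin m → ℝ, f w = ∑ j, w j * c j := by
      intro w
      have hw : w = ∑ j, w j • (fun t => if j = t then (1 : ℝ) else 0) := pi_eq_sum_univ w
      calc f w = f (∑ j, w j • (fun t => if j = t then (1 : ℝ) else 0)) := by rw [← hw]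
        _ = ∑ j, w j * c j := by
            rw [map_sum]
            exact Finset.sum_congr rfl fun j _ => by rw [map_smul, smul_eq_mul]
    set g : E →L[ℝ] ℝ := ∑ j, c j • fs j with hg
    have hgx : ∀ x : E, g x = f (L x) := by
      intro x
      rw [hf]
      simp only [hg, ContinuousLinearMap.sum_apply, ContinuousLinearMap.coe_smul',
        Pi.smul_apply, smul_eq_mul, hL]
      exact Finset.sum_congr rfl fun j _ => mul_comm _ _
    have hball : ∀ x : E, ‖x‖ ≤ R → g x < u := by
      intro x hx
      rw [hgx]
      exact hfV _ (subset_closure ⟨x, mem_closedBall_zero_iff.2 hx, rfl⟩)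
    have hu0 : 0 < u := by
      have := hball 0 (by rw [norm_zero]; positivity)
      simpa using this
    have hft : f tv = φ g := by
      rw [hf]
      rw [hg, map_sum]
      exact Finset.sum_congr rfl fun j _ => by rw [map_smul, smul_eq_mul, mul_comm]
    have hgnorm : ‖g‖ ≤ u / R := by
      refine ContinuousLinearMap.opNorm_le_bound g (by positivity) fun x => ?_
      rcases eq_or_ne x 0 with rfl | hx
      · simp
      · have hxn : 0 < ‖x‖ := norm_pos_iff.2 hx
        set x' := (R / ‖x‖) • x with hx'def
        have hx' : ‖x'‖ = R := by
          rw [hx'def, norm_smul, Real.norm_eq_abs, abs_of_pos (by positivity)]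
          field_simp
        have h1 : g x' < u := hball x' hx'.le
        have h2 : g (-x') < u := hball (-x') (by rw [norm_neg]; exact hx'.le)
        have h3 : |g x'| ≤ u := by
          rw [map_neg] at h2
          exact abs_le.2 ⟨by linarith, h1.le⟩
        rw [hx'def, map_smul, smul_eq_mul, abs_mul, abs_of_pos (by positivity)] at h3
        rw [Real.norm_eq_abs, div_mul_eq_mul_div, le_div_iff₀ hR]
        have h4 := mul_le_mul_of_nonneg_right h3 (norm_nonneg x)
        calc |g x| * R = R / ‖x‖ * |g x| * ‖x‖ := by field_simp
          _ ≤ u * ‖x‖ := h4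
    have hphig : φ g ≤ ‖φ‖ * ‖g‖ := by
      calc φ g ≤ |φ g| := le_abs_self _
        _ = ‖φ g‖ := rfl
        _ ≤ ‖φ‖ * ‖g‖ := φ.le_opNorm g
    have hRg : R * ‖g‖ ≤ u := by
      rw [mul_comm, ← le_div_iff₀ hR]
      exact hgnorm
    have hgn : 0 ≤ ‖g‖ := norm_nonneg g
    have huf : u < φ g := by rw [← hft]; exact hfu
    nlinarith [hRg, hphig, huf, hgn]
  obtain ⟨v, hvV, hvdist⟩ := Metric.mem_closure_iff.1 htv ε hε
  obtain ⟨x, hxball, rfl⟩ := hvV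
  refine ⟨x, mem_closedBall_zero_iff.1 hxball, fun j => ?_⟩
  have := dist_le_pi_dist tv (L x) j
  have h2 : dist (tv j) (L x j) < ε := lt_of_le_of_lt this hvdist
  rw [Real.dist_eq] at h2
  calc |fs j x - φ (fs j)| = |tv j - L x j| := by rw [abs_sub_comm]; rfl
    _ < ε := h2


variable [CompleteSpace F]

variable {F : Type*} [NormedAddCommGroup F] [Lattice F] [HasSolidNorm F] [IsOrderedAddMonoid F] [NormedSpace ℝ F] [CompleteSpace F]

lemma st19_summable (y : ℕ → F) (b : ℝ) (hb : 0 < b)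
    (hup : ∀ (s : Finset ℕ) (c : ℕ → ℝ) (t : ℝ), 0 ≤ t → (∀ k ∈ s, |c k| ≤ t) →
      ‖∑ k ∈ s, c k • y k‖ ≤ b * t)
    (c : ℕ → ℝ) (hc : Tendsto c atTop (𝓝 0)) : Summable fun k => c k • y k := by
  rw [summable_iff_vanishing_norm]
  intro ε hε
  have hε2 : 0 < ε / (2 * b) := by positivity
  obtain ⟨N, hN⟩ := (Metric.tendsto_atTop.1 hc) (ε / (2 * b)) hε2
  refine ⟨Finset.range N, fun t hdisj => ?_⟩
  have hbound : ∀ k ∈ t, |c k| ≤ ε / (2 * b) := by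
    intro k hk
    have hkN : N ≤ k := by
      by_contra hlt
      exact (Finset.disjoint_left.1 hdisj) hk (Finset.mem_range.2 (not_le.1 hlt))
    simpa [Real.dist_eq] using (hN k hkN).le
  calc ‖∑ k ∈ t, c k • y k‖ ≤ b * (ε / (2 * b)) := hup t c _ hε2.le hbound
    _ = ε / 2 := by field_simp
    _ < ε := by linarith

lemma st19_norm_tsum_le (f : ℕ → F) (hf : Summable f) (R : ℝ)
    (h : ∀ s : Finset ℕ, ‖∑ k ∈ s, f k‖ ≤ R) : ‖∑' k, f k‖ ≤ R := by
  have := hf.hasSum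
  exact le_of_tendsto ((continuous_norm.tendsto _).comp this) (Filter.Eventually.of_forall h)

lemma st19_tsum_nonneg (f : ℕ → F) (h : ∀ k, 0 ≤ f k) : 0 ≤ ∑' k, f k := tsum_nonneg h

lemma st19_sum_le_tsum (f : ℕ → F) (hf : Summable f) (h : ∀ k, 0 ≤ f k) (s : Finset ℕ) :
    ∑ k ∈ s, f k ≤ ∑' k, f k := by
  have := Summable.sum_add_tsum_compl (s := s) hf
  have hcompl : 0 ≤ ∑' (k : {x // x ∉ s}), f k := tsum_nonneg fun k => h k
  calc ∑ k ∈ s, f k ≤ ∑ k ∈ s, f k + ∑' (k : {x // x ∉ s}), f k := le_add_of_nonneg_right hcompl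
    _ = ∑' k, f k := this


variable {E F : Type*} [NormedAddCommGroup E] [Lattice E] [HasSolidNorm E] [IsOrderedAddMonoid E] [NormedSpace ℝ E]
  [NormedAddCommGroup F] [Lattice F] [HasSolidNorm F] [IsOrderedAddMonoid F] [NormedSpace ℝ F] [CompleteSpace F]

lemma st19_poly (n : ℕ) (hn : 1 ≤ n) (xs : ℕ → E →L[ℝ] ℝ)
    (hxspos : ∀ k, ∀ x : E, 0 ≤ x → 0 ≤ xs k x)
    (hxswstar : ∀ x : E, Tendsto (fun k => xs k x) atTop (𝓝 0))
    (C : ℝ) (hC0 : 0 ≤ C) (hC : ∀ k, ‖xs k‖ ≤ C)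
    (y : ℕ → F) (hypos : ∀ k, 0 ≤ y k) (b : ℝ) (hb : 0 < b)
    (hup : ∀ (s : Finset ℕ) (c : ℕ → ℝ) (t : ℝ), 0 ≤ t → (∀ k ∈ s, |c k| ≤ t) →
      ‖∑ k ∈ s, c k • y k‖ ≤ b * t)
    (hsummable : ∀ c : ℕ → ℝ, Tendsto c atTop (𝓝 0) → Summable fun k => c k • y k) :
    ∃ T : ContinuousMultilinearMap ℝ (fun _ : Fin n => E) F,
      (∀ (v : Fin n → E) (σ : Equiv.Perm (Fin n)), T (v ∘ σ) = T v) ∧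
      (∀ v : Fin n → E, (∀ i, 0 ≤ v i) → 0 ≤ T v) ∧
      (∀ x : E, T (fun _ => x) = ∑' k, (xs k x) ^ n • y k) := by
  classical
  set cf : (Fin n → E) → ℕ → ℝ := fun v k => ∏ i, xs k (v i) with hcf
  have hfac : ∀ (v : Fin n → E) (k : ℕ) (i : Fin n), |xs k (v i)| ≤ C * ‖v i‖ := by
    intro v k i
    calc |xs k (v i)| = ‖xs k (v i)‖ := (Real.norm_eq_abs _).symm
      _ ≤ ‖xs k‖ * ‖v i‖ := (xs k).le_opNorm _
      _ ≤ C * ‖v i‖ := mul_le_mul_of_nonneg_right (hC k) (norm_nonneg _)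
  have hcfabs : ∀ (v : Fin n → E) (k : ℕ), |cf v k| ≤ C ^ n * ∏ i, ‖v i‖ := by
    intro v k
    rw [hcf]
    simp only []
    rw [Finset.abs_prod]
    calc ∏ i, |xs k (v i)| ≤ ∏ i, C * ‖v i‖ :=
          Finset.prod_le_prod (fun i _ => abs_nonneg _) (fun i _ => hfac v k i)
      _ = C ^ n * ∏ i, ‖v i‖ := by
          rw [Finset.prod_mul_distrib, Finset.prod_const]
          simp
  have hcftend : ∀ v : Fin n → E, Tendsto (cf v) atTop (𝓝 0) := by
    intro v
    have i₀ : Fin n := ⟨0, hn⟩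
    set M : ℝ := ∏ i ∈ Finset.univ.erase i₀, (C * ‖v i‖) with hM
    have hsq : ∀ k, ‖cf v k‖ ≤ M * |xs k (v i₀)| := by
      intro k
      have hsplit : cf v k = xs k (v i₀) * ∏ i ∈ Finset.univ.erase i₀, xs k (v i) :=
        (Finset.mul_prod_erase Finset.univ _ (Finset.mem_univ i₀)).symm
      rw [Real.norm_eq_abs, hsplit, abs_mul, Finset.abs_prod, mul_comm]
      apply mul_le_mul _ le_rfl (abs_nonneg _) _
      · exact Finset.prod_le_prod (fun i _ => abs_nonneg _) (fun i _ => hfac v k i)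
      · rw [hM]; exact Finset.prod_nonneg fun i _ => by positivity
    have hM0 : Tendsto (fun k => M * |xs k (v i₀)|) atTop (𝓝 0) := by
      have := ((hxswstar (v i₀)).abs).const_mul M
      simpa using this
    exact squeeze_zero_norm hsq hM0
  have hsumm : ∀ v : Fin n → E, Summable fun k => cf v k • y k :=
    fun v => hsummable _ (hcftend v)
  have hupd : ∀ (dec : DecidableEq (Fin n)) (v : Fin n → E) (i : Fin n) (x : E) (k : ℕ),
      cf (@Function.update _ _ dec v i x) k
        = xs k x * ∏ j ∈ Finset.univ \ {i}, xs k (v j) := by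
    intro dec v i x k
    have h1 : ∀ j, xs k (Function.update v i x j)
        = Function.update (fun j => xs k (v j)) i (xs k x) j := fun j =>
      Function.apply_update (fun _ t => xs k t) v i x j
    rw [hcf]
    simp only []
    rw [Finset.prod_congr rfl fun j _ => h1 j]
    exact Finset.prod_update_of_mem (Finset.mem_univ i) _ _
  set T₀ : MultilinearMap ℝ (fun _ : Fin n => E) F :=
    { toFun := fun v => ∑' k, cf v k • y k
      map_update_add' := by
        intro dec v i x x'
        have hptw : ∀ k, cf (Function.update v i (x + x')) k • y k
            = cf (Function.update v i x) k • y k + cf (Function.update v i x') k • y k := by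
          intro k
          rw [hupd dec, hupd dec, hupd dec, map_add, add_mul, add_smul]
        calc (∑' k, cf (Function.update v i (x + x')) k • y k)
            = ∑' k, (cf (Function.update v i x) k • y k + cf (Function.update v i x') k • y k) :=
              tsum_congr hptw
          _ = _ := Summable.tsum_add (hsumm _) (hsumm _)
      map_update_smul' := by
        intro dec v i r x
        have hptw : ∀ k, cf (Function.update v i (r • x)) k • y k
            = r • (cf (Function.update v i x) k • y k) := by
          intro k
          rw [hupd dec, hupd dec, map_smul, smul_smul]
          congr 1
          simp [mul_assoc]
        calc (∑' k, cf (Function.update v i (r • x)) k • y k)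
            = ∑' k, r • (cf (Function.update v i x) k • y k) := tsum_congr hptw
          _ = r • ∑' k, cf (Function.update v i x) k • y k :=
              Summable.tsum_const_smul r (hsumm _) } with hT₀
  have hT₀apply : ∀ v : Fin n → E, T₀ v = ∑' k, cf v k • y k := fun v => rfl
  have hbound : ∀ v : Fin n → E, ‖T₀ v‖ ≤ (b * C ^ n) * ∏ i, ‖v i‖ := by
    intro v
    have h1 : ‖∑' k, cf v k • y k‖ ≤ b * (C ^ n * ∏ i, ‖v i‖) :=
      st19_norm_tsum_le (fun k => cf v k • y k) (hsumm v) _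
        (fun s => hup s (cf v) _ (by positivity) fun k _ => hcfabs v k)
    calc ‖T₀ v‖ = ‖∑' k, cf v k • y k‖ := by rw [hT₀apply]
      _ ≤ b * (C ^ n * ∏ i, ‖v i‖) := h1
      _ = (b * C ^ n) * ∏ i, ‖v i‖ := by ring
  set T : ContinuousMultilinearMap ℝ (fun _ : Fin n => E) F :=
    T₀.mkContinuous (b * C ^ n) hbound with hT
  have hTapply : ∀ v : Fin n → E, T v = ∑' k, cf v k • y k := by
    intro v
    rw [hT]
    exact (congrFun (T₀.coe_mkContinuous (b * C ^ n) hbound) v).trans (hT₀apply v)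
  refine ⟨T, ?_, ?_, ?_⟩
  · intro v σ
    rw [hTapply, hTapply]
    refine tsum_congr fun k => ?_
    congr 1
    exact Equiv.prod_comp σ (fun i => xs k (v i))
  · intro v hv
    rw [hTapply]
    exact tsum_nonneg fun k =>
      st19_smul_nonneg (Finset.prod_nonneg fun i _ => hxspos k _ (hv i)) (hypos k)
  · intro x
    rw [hTapply]
    refine tsum_congr fun k => ?_
    congr 1
    rw [hcf]
    simp only []
    rw [Finset.prod_const]
    simp


end St19Aux

theorem statement19 {E F : Type*} [NormedAddCommGroup E] [Lattice E] [HasSolidNorm E] [IsOrderedAddMonoid E] [NormedSpace ℝ E] [CompleteSpace E]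
    [NormedAddCommGroup F] [Lattice F] [HasSolidNorm F] [IsOrderedAddMonoid F] [NormedSpace ℝ F] [CompleteSpace F]
    (n : ℕ) (hn : 1 ≤ n)
    (hFoc : HasOCNorm F)
    (xs : ℕ → (E →L[ℝ] ℝ))
    (hxspos : ∀ k, ∀ x : E, 0 ≤ x → 0 ≤ xs k x)
    (hxswstar : ∀ x : E, Tendsto (fun k => xs k x) atTop (nhds 0))
    -- (xs k) is not weakly null
    (hxsnotweak : ∃ φ : (E →L[ℝ] ℝ) →L[ℝ] ℝ, ¬ Tendsto (fun k => φ (xs k)) atTop (nhds 0))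
    (y : ℕ → F) (hypos : ∀ k, 0 ≤ y k)
    (a b : ℝ) (ha : 0 < a) (hab : a ≤ b)
    -- (y_k) is equivalent to the canonical basis of c₀
    (hbasis : ∀ (m : ℕ) (c : Fin (m + 1) → ℝ),
      a * (Finset.univ.sup' Finset.univ_nonempty fun k : Fin (m + 1) => |c k|) ≤
          ‖∑ k : Fin (m + 1), c k • y (k : ℕ)‖ ∧
      ‖∑ k : Fin (m + 1), c k • y (k : ℕ)‖ ≤
          b * (Finset.univ.sup' Finset.univ_nonempty fun k : Fin (m + 1) => |c k|)) :
    ∃ P : E → F,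
      (∀ x : E, Tendsto (fun m => ∑ k ∈ Finset.range m, (xs k x) ^ n • y k)
        atTop (nhds (P x))) ∧
      IsPosPoly n P ∧ ¬ IsWeaklyCompactPoly P := by
  classical
  have hb : 0 < b := lt_of_lt_of_le ha hab
  -- uniform bound on ‖xs k‖
  obtain ⟨C₀, hC₀⟩ : ∃ C₀, ∀ k, ‖xs k‖ ≤ C₀ := by
    apply banach_steinhaus
    intro x
    obtain ⟨Cx, hCx⟩ := Filter.Tendsto.bddAbove_range ((hxswstar x).norm)
    exact ⟨Cx, fun k => hCx ⟨k, rfl⟩⟩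
  set C : ℝ := max C₀ 0 with hCdef
  have hC0 : 0 ≤ C := le_max_right _ _
  have hC : ∀ k, ‖xs k‖ ≤ C := fun k => (hC₀ k).trans (le_max_left _ _)
  have hup := st19_norm_sum_le y a b hb hbasis
  have hsummable := st19_summable y b hb hup
  obtain ⟨T, hTsym, hTpos, hTeval⟩ :=
    st19_poly n hn xs hxspos hxswstar C hC0 hC y hypos b hb hup hsummable
  set P : E → F := fun x => ∑' k, (xs k x) ^ n • y k with hP
  have hcoefnull : ∀ x : E, Tendsto (fun k => (xs k x) ^ n) atTop (𝓝 0) := by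
    intro x
    have := (hxswstar x).pow n
    simpa [zero_pow (by omega : n ≠ 0)] using this
  have hPsum : ∀ x : E, Summable fun k => (xs k x) ^ n • y k :=
    fun x => hsummable _ (hcoefnull x)
  refine ⟨P, ?_, ⟨T, hTsym, hTpos, fun x => (hTeval x).symm⟩, ?_⟩
  · intro x
    exact (hPsum x).hasSum.tendsto_sum_nat
  -- non weak compactness
  intro hcomp
  obtain ⟨φ, hφ⟩ := hxsnotweak
  have hfreq : ∃ ε > 0, ∃ᶠ k in atTop, ε ≤ |φ (xs k)| := by
    by_contra h
    push_neg at h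
    apply hφ
    rw [Metric.tendsto_atTop]
    intro ε hε
    have h2 := h (ε / 2) (by positivity)
    rw [Filter.eventually_atTop] at h2
    obtain ⟨N, hN⟩ := h2
    refine ⟨N, fun k hk => ?_⟩
    have := hN k hk
    rw [Real.dist_eq, sub_zero]
    linarith
  obtain ⟨ε, hε, hfr⟩ := hfreq
  obtain ⟨κ, hκmono, hκ⟩ := Filter.extraction_of_frequently_atTop hfr
  set R : ℝ := ‖φ‖ + 1 with hRdef
  have hR : 0 < R := by positivity
  have hR1 : 1 ≤ R := le_add_of_nonneg_left (norm_nonneg φ)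
  have hx' : ∀ m : ℕ, ∃ x : E, ‖x‖ ≤ R ∧
      ∀ j : Fin (m + 1), |xs (κ j) x - φ (xs (κ j))| < ε / 2 :=
    fun m => st19_helly φ (m + 1) (fun j => xs (κ (j : ℕ))) (by positivity)
  choose x₀ hx₀norm hx₀apx using hx'
  set δ₀ : ℝ := ε / (2 * R) with hδ₀
  have hδ₀pos : 0 < δ₀ := by positivity
  set u : ℕ → E := fun m => (1 / R) • |x₀ m| with hu
  have hunorm : ∀ m, ‖u m‖ ≤ 1 := by
    intro m
    rw [hu]
    simp only []
    rw [norm_smul, Real.norm_eq_abs, abs_of_pos (by positivity), norm_abs_eq_norm]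
    calc 1 / R * ‖x₀ m‖ ≤ 1 / R * R :=
          mul_le_mul_of_nonneg_left (hx₀norm m) (by positivity)
      _ = 1 := by field_simp
  have hupos : ∀ m, 0 ≤ u m := fun m => st19_smul_nonneg (by positivity) (abs_nonneg _)
  have hcoord : ∀ m j : ℕ, j ≤ m → δ₀ ≤ xs (κ j) (u m) := by
    intro m j hj
    have h1 : ε / 2 ≤ |xs (κ j) (x₀ m)| := by
      have ha1 := hx₀apx m ⟨j, Nat.lt_succ_of_le hj⟩
      have ha2 := hκ j
      simp only [Fin.val_mk] at ha1
      have := abs_sub_abs_le_abs_sub (φ (xs (κ j))) (xs (κ j) (x₀ m))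
      rw [abs_sub_comm] at ha1
      linarith
    have h2 : |xs (κ j) (x₀ m)| ≤ xs (κ j) |x₀ m| := by
      have hp1 : 0 ≤ xs (κ j) (|x₀ m| - x₀ m) :=
        hxspos _ _ (sub_nonneg.2 (le_abs_self (x₀ m)))
      have hp2 : 0 ≤ xs (κ j) (|x₀ m| + x₀ m) := by
        apply hxspos
        have h3 : (0:E) ≤ |x₀ m| - -(x₀ m) := sub_nonneg.2 (neg_le_abs (x₀ m))
        rwa [sub_neg_eq_add] at h3
      rw [map_sub] at hp1
      rw [map_add] at hp2
      rw [abs_le]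
      constructor <;> linarith
    have h3 : xs (κ j) (u m) = (1 / R) * xs (κ j) |x₀ m| := by
      rw [hu]
      simp only []
      rw [map_smul, smul_eq_mul]
    rw [h3, hδ₀]
    have hstep : (1 / R) * (ε / 2) = ε / (2 * R) := by
      rw [one_div, inv_mul_eq_div, div_div]
    calc ε / (2 * R) = (1 / R) * (ε / 2) := hstep.symm
      _ ≤ (1 / R) * xs (κ j) |x₀ m| := by
          apply mul_le_mul_of_nonneg_left _ (by positivity)
          linarith
  set δ : ℝ := δ₀ ^ n with hδ
  have hδpos : 0 < δ := by positivity
  set t : ℕ → F := fun m => ∑ j ∈ Finset.range (m + 1), δ • y (κ j) with ht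
  have htmono : Monotone t := by
    apply monotone_nat_of_le_succ
    intro m
    rw [ht]
    simp only []
    rw [Finset.sum_range_succ (n := m + 1)]
    exact le_add_of_nonneg_right (st19_smul_nonneg hδpos.le (hypos _))
  have hkey : ∀ m m' : ℕ, m ≤ m' → t m ≤ P (u m') := by
    intro m m' hmm'
    have h1 : t m' ≤ ∑ j ∈ Finset.range (m' + 1), (xs (κ j) (u m')) ^ n • y (κ j) := by
      rw [ht]
      simp only []
      apply Finset.sum_le_sum
      intro j hj
      apply st19_smul_le_smul _ (hypos _)
      rw [hδ]
      exact pow_le_pow_left₀ hδ₀pos.le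
        (hcoord m' j (Nat.lt_succ_iff.1 (Finset.mem_range.1 hj))) n
    have h2 : ∑ j ∈ Finset.range (m' + 1), (xs (κ j) (u m')) ^ n • y (κ j) ≤ P (u m') := by
      have hreidx : ∑ j ∈ Finset.range (m' + 1), (xs (κ j) (u m')) ^ n • y (κ j)
          = ∑ k ∈ (Finset.range (m' + 1)).image κ, (xs k (u m')) ^ n • y k := by
        rw [Finset.sum_image]
        intro i _ j _ hij
        exact hκmono.injective hij
      rw [hreidx, hP]
      apply st19_sum_le_tsum _ (hPsum (u m'))
      intro k
      exact st19_smul_nonneg (pow_nonneg (hxspos k _ (hupos m')) n) (hypos k)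
    exact le_trans (htmono hmm') (le_trans h1 h2)
  -- cluster point
  have hsub : ∀ m, (toWeakSpace ℝ F) (P (u m)) ∈
      closure ((toWeakSpace ℝ F) '' (P '' closedBall (0 : E) 1)) := by
    intro m
    apply subset_closure
    exact ⟨P (u m), ⟨u m, mem_closedBall_zero_iff.2 (hunorm m), rfl⟩, rfl⟩
  have hle : Filter.map (fun m => (toWeakSpace ℝ F) (P (u m))) atTop ≤
      𝓟 (closure ((toWeakSpace ℝ F) '' (P '' closedBall (0 : E) 1))) := by
    rw [Filter.le_principal_iff, Filter.mem_map]
    exact Filter.Eventually.of_forall hsub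
  obtain ⟨zw, hzwK, hzcl⟩ := hcomp.exists_mapClusterPt (f := atTop)
    (u := fun m => (toWeakSpace ℝ F) (P (u m))) hle
  set z : F := (toWeakSpace ℝ F).symm zw with hz
  have hzge : ∀ m, t m ≤ z := by
    intro m
    by_contra hlt
    have hnot : z - t m ∉ {w : F | 0 ≤ w} := by
      intro hmem
      exact hlt (sub_nonneg.1 hmem)
    have hconv : Convex ℝ {w : F | 0 ≤ w} := by
      intro w1 h1 w2 h2 p q hp hq hpq
      exact add_nonneg (st19_smul_nonneg hp h1) (st19_smul_nonneg hq h2)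
    have hclosed : IsClosed {w : F | 0 ≤ w} := isClosed_le continuous_const continuous_id
    obtain ⟨f, u', hfcone, hfpt⟩ := geometric_hahn_banach_closed_point hconv hclosed hnot
    have hu'pos : 0 < u' := by
      have := hfcone 0 le_rfl
      simpa using this
    have hfnonpos : ∀ w : F, 0 ≤ w → f w ≤ 0 := by
      intro w hw
      by_contra hfw
      push_neg at hfw
      obtain ⟨k, hk⟩ := exists_nat_gt (u' / f w)
      have h1 : f ((k : ℕ) • w) < u' := hfcone _ (nsmul_nonneg hw k)
      have h2 : (k : ℝ) * f w < u' := by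
        rw [map_nsmul, nsmul_eq_mul] at h1
        exact h1
      rw [div_lt_iff₀ hfw] at hk
      linarith only [h2, hk]
    -- weak continuity of f
    have hGcont : Continuous (fun w : WeakSpace ℝ F => f ((toWeakSpace ℝ F).symm w)) :=
      WeakBilin.eval_continuous ((topDualPairing ℝ F).flip) f
    have hGz : MapClusterPt (f z) atTop (fun m => f (P (u m))) := by
      have h1 := hzcl.continuousAt_comp (hGcont.continuousAt)
      have heq : ((fun w : WeakSpace ℝ F => f ((toWeakSpace ℝ F).symm w)) ∘
          (fun m => (toWeakSpace ℝ F) (P (u m)))) = fun m => f (P (u m)) := by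
        funext m
        simp
      rw [heq] at h1
      exact h1
    have hev : ∀ m' : ℕ, m ≤ m' → f (P (u m')) ≤ f (t m) := by
      intro m' hmm'
      have h1 : 0 ≤ P (u m') - t m := sub_nonneg.2 (hkey m m' hmm')
      have h2 := hfnonpos _ h1
      rw [map_sub] at h2
      linarith only [h2]
    have hgap : f (t m) < f z - u' := by
      have h2 := hfpt
      rw [map_sub] at h2
      linarith only [h2]
    have hfreq2 := (mapClusterPt_iff_frequently.1 hGz) (Metric.ball (f z) u') (Metric.ball_mem_nhds _ hu'pos)
    obtain ⟨m', hm1, hm2⟩ := (hfreq2.and_eventually (Filter.eventually_ge_atTop m)).exists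
    have hdist := hm1
    rw [Metric.mem_ball, Real.dist_eq] at hdist
    have h5 := hev m' hm2
    have h6 : f z - f (P (u m')) ≤ |f (P (u m')) - f z| := by
      rw [abs_sub_comm]
      exact le_abs_self _
    linarith only [hdist, h5, h6, hgap]
  obtain ⟨m, hm⟩ := st19_oc hFoc t htmono z hzge (show 0 < δ * a by positivity)
  have hdiff : t (m + 1) - t m = δ • y (κ (m + 1)) := by
    rw [ht]
    simp only []
    rw [Finset.sum_range_succ (n := m + 1)]
    abel
  rw [hdiff, norm_smul, Real.norm_eq_abs, abs_of_pos hδpos] at hm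
  have := st19_a_le_norm_y y a b hbasis (κ (m + 1))
  have h7 : δ * a ≤ δ * ‖y (κ (m + 1))‖ := mul_le_mul_of_nonneg_left this hδpos.le
  linarith
end
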